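/- arXiv:1511.08443 — 5 statements merged into one kernel-verified Lean document; each statement's English description precedes it below -/
import Mathlib

section
/- Let Φ be a multi-Hilbertian space and let X be a Φ'_β-valued random variable which is regular, i.e., there exists a weaker countably Hilbertian topology θ on Φ with P(ω : X(ω) ∈ Φ'_θ) = 1. Then the map X : Φ → L⁰(Ω,F,P), φ ↦ X[φ], is continuous. -/
open MeasureTheory Topology Filter Set
open scoped ENNReal NNReal

noncomputable section

namespace Paper

universe u

variable {Φ : Type*} [AddCommGroup Φ] [Module ℝ Φ]

/-- A seminorm `p` is *Hilbertian* if `p(φ)² = Q(φ,φ)` for a symmetric non-negative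
bilinear form `Q` on `Φ × Φ`. -/
def IsHilbertian (p : Seminorm ℝ Φ) : Prop :=
  ∃ Q : Φ →ₗ[ℝ] Φ →ₗ[ℝ] ℝ, (∀ x y, Q x y = Q y x) ∧ (∀ x, 0 ≤ Q x x) ∧ ∀ x, (p x) ^ 2 = Q x x

/-- The Hilbert space `Φ_p` (the completion of `Φ/ker p`) is separable; intrinsically:
there is a countable `p`-dense subset of `Φ`. -/
def HasSeparableQuotient (p : Seminorm ℝ Φ) : Prop :=
  ∃ D : Set Φ, D.Countable ∧ ∀ x : Φ, ∀ ε : ℝ, 0 < ε → ∃ y ∈ D, p (x - y) < ε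

/-- The polarization form associated to a Hilbertian seminorm `q`. -/
def polarForm (q : Seminorm ℝ Φ) (x y : Φ) : ℝ :=
  ((q (x + y)) ^ 2 - (q x) ^ 2 - (q y) ^ 2) / 2

/-- For Hilbertian seminorms `p ≤ q`, the canonical inclusion `i_{p,q} : Φ_q → Φ_p` is
Hilbert–Schmidt; intrinsically: the sums `∑ p(φᵢ)²` over finite `q`-orthonormal families
are uniformly bounded. -/
def IsHilbertSchmidtPair (p q : Seminorm ℝ Φ) : Prop :=
  ∃ C : ℝ, ∀ (m : ℕ) (φ : Fin m → Φ),
    (∀ i j, polarForm q (φ i) (φ j) = if i = j then 1 else 0) →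
    ∑ i, (p (φ i)) ^ 2 ≤ C

/-- A linear functional on `Φ` belongs to the Hilbert space `Φ'_q` (the dual of `Φ_q`)
iff it is `q`-bounded. -/
def MemDualOf (q : Seminorm ℝ Φ) (f : Φ →ₗ[ℝ] ℝ) : Prop :=
  ∃ C : ℝ, ∀ φ, |f φ| ≤ C * q φ

/-- The dual norm `q'` on `Φ'_q`. -/
def dualNorm (q : Seminorm ℝ Φ) (f : Φ →ₗ[ℝ] ℝ) : ℝ :=
  sSup ((fun φ => |f φ|) '' {φ | q φ ≤ 1})

section TopologySection

variable [TopologicalSpace Φ]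

/-- `Φ` is a nuclear space: its topology is generated by a family of Hilbertian seminorms
such that each member is dominated by another one with Hilbert–Schmidt inclusion. -/
def IsNuclearSpace (Φ : Type*) [AddCommGroup Φ] [Module ℝ Φ] [TopologicalSpace Φ] : Prop :=
  ∃ (ι : Type) (hι : Nonempty ι) (fam : SeminormFamily ℝ Φ ι),
    (haveI := hι; WithSeminorms fam) ∧
    (∀ i, IsHilbertian (fam i)) ∧
    ∀ i, ∃ j, fam i ≤ fam j ∧ IsHilbertSchmidtPair (fam i) (fam j)

/-- `Φ` is multi-Hilbertian: its topology is generated by a family of Hilbertian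
seminorms, each with separable associated Hilbert space. -/
def IsMultiHilbertian (Φ : Type*) [AddCommGroup Φ] [Module ℝ Φ] [TopologicalSpace Φ] : Prop :=
  ∃ (ι : Type) (hι : Nonempty ι) (fam : SeminormFamily ℝ Φ ι),
    (haveI := hι; WithSeminorms fam) ∧
    ∀ i, IsHilbertian (fam i) ∧ HasSeparableQuotient (fam i)

/-- A weaker countably Hilbertian topology `θ` on `Φ`: an increasing sequence of
continuous Hilbertian seminorms with separable associated Hilbert spaces. -/
structure WCHT (Φ : Type*) [AddCommGroup Φ] [Module ℝ Φ] [TopologicalSpace Φ] where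
  p : ℕ → Seminorm ℝ Φ
  mono : Monotone p
  hilb : ∀ n, IsHilbertian (p n)
  sep : ∀ n, HasSeparableQuotient (p n)
  cont : ∀ n, Continuous ⇑(p n)

/-- `f ∈ Φ'_θ = ⋃ₙ Φ'_{pₙ}`: `f` is continuous for the countably Hilbertian topology `θ`. -/
def WCHT.MemDual (θ : WCHT Φ) (f : Φ → ℝ) : Prop :=
  ∃ (n : ℕ) (C : ℝ), ∀ φ, |f φ| ≤ C * θ.p n φ

end TopologySection

/-- Borel measurability of a map into a topological space. -/
def BorelMeasurable {Ω : Type*} [MeasurableSpace Ω] {α : Type*} [TopologicalSpace α]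
    (X : Ω → α) : Prop :=
  letI := borel α
  Measurable X

/-- The distribution `μ_X` of `X`, as a Borel measure. -/
def distributionOf {Ω : Type*} [MeasurableSpace Ω] {α : Type*} [TopologicalSpace α]
    (P : Measure Ω) (X : Ω → α) : @Measure α (borel α) :=
  letI := borel α
  P.map X

/-- A Borel measure `μ` is *Radon* if for every Borel set `A` and `ε > 0` there is a
compact `K ⊆ A` with `μ (A \ K) < ε`. -/
def IsRadon {α : Type*} [TopologicalSpace α] {mα : MeasurableSpace α}
    (μ : @Measure α mα) : Prop :=
  ∀ A : Set α, MeasurableSet[mα] A → ∀ ε : ℝ≥0∞, 0 < ε →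
    ∃ K, K ⊆ A ∧ IsCompact K ∧ μ (A \ K) < ε

section ProbSection

variable {Ω : Type*} [MeasurableSpace Ω] [TopologicalSpace Φ]

/-- Continuity of `φ ↦ X(φ)` from `Φ` into `L⁰(Ω,F,P)` (convergence in probability). -/
def ContinuousInProb (P : Measure Ω) (X : Φ → Ω → ℝ) : Prop :=
  ∀ φ₀ : Φ, ∀ ε : ℝ, 0 < ε → ∃ U ∈ 𝓝 φ₀, ∀ φ ∈ U,
    P {ω | ε ≤ |X φ ω - X φ₀ ω|} < ENNReal.ofReal ε

/-- Equicontinuity of the family `{X_t : t ∈ s}` of (linear) maps `Φ → L⁰(Ω,F,P)`. -/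
def EquicontinuousInProb (P : Measure Ω) (X : ℝ → Φ → Ω → ℝ) (s : Set ℝ) : Prop :=
  ∀ ε : ℝ, 0 < ε → ∃ U ∈ 𝓝 (0 : Φ), ∀ t ∈ s, ∀ φ ∈ U,
    P {ω | ε ≤ |X t φ ω|} < ENNReal.ofReal ε

/-- `p`-continuity of a (linear) map `Φ → L⁰(Ω,F,P)`. -/
def SeminormContinuousInProb (P : Measure Ω) (p : Seminorm ℝ Φ) (X : Φ → Ω → ℝ) : Prop :=
  ∀ ε : ℝ, 0 < ε → ∃ δ : ℝ, 0 < δ ∧ ∀ φ : Φ, p φ < δ →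
    P {ω | ε ≤ |X φ ω|} < ENNReal.ofReal ε

/-- A cylindrical process in `Φ'`: for each `t ∈ s`, a linear map `Φ → L⁰(Ω,F,P)`. -/
def IsCylindricalProcess (P : Measure Ω) (X : ℝ → Φ → Ω → ℝ) (s : Set ℝ) : Prop :=
  (∀ t ∈ s, ∀ φ : Φ, Measurable (X t φ)) ∧
  ∀ t ∈ s, ∀ (a b : ℝ) (φ ψ : Φ), ∀ᵐ ω ∂P,
    X t (a • φ + b • ψ) ω = a * X t φ ω + b * X t ψ ω

/-- A `Φ'_β`-valued random variable is *regular* if it is a.s. concentrated on the dual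
of a weaker countably Hilbertian topology. -/
def IsRegularRV (P : Measure Ω) (X : Ω → (Φ →L[ℝ] ℝ)) : Prop :=
  ∃ θ : WCHT Φ, ∀ᵐ ω ∂P, θ.MemDual ⇑(X ω)

end ProbSection

/-- Right-continuity with left limits (càdlàg) of a path on a set `s ⊆ ℝ`. -/
def CadlagOn {α : Type*} [TopologicalSpace α] (f : ℝ → α) (s : Set ℝ) : Prop :=
  (∀ t ∈ s, ContinuousWithinAt f (s ∩ Ici t) t) ∧
  ∀ t ∈ s, (𝓝[s ∩ Iio t] t).NeBot → ∃ l : α, Tendsto f (𝓝[s ∩ Iio t] t) (𝓝 l)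

/-- Path regularity: continuous (`cts = true`) or càdlàg (`cts = false`) paths on `s`. -/
def PathReg {α : Type*} [TopologicalSpace α] (cts : Bool) (f : ℝ → α) (s : Set ℝ) : Prop :=
  if cts then ContinuousOn f s else CadlagOn f s

/-- Path regularity of a `Φ'_q`-valued path, in the dual norm `q'`. -/
def PathRegDual (cts : Bool) (q : Seminorm ℝ Φ) (f : ℝ → (Φ →ₗ[ℝ] ℝ)) (s : Set ℝ) : Prop :=
  if cts then ∀ t ∈ s, Tendsto (fun u => dualNorm q (f u - f t)) (𝓝[s] t) (𝓝 0)
  else ((∀ t ∈ s, Tendsto (fun u => dualNorm q (f u - f t)) (𝓝[s ∩ Ici t] t) (𝓝 0)) ∧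
    ∀ t ∈ s, (𝓝[s ∩ Iio t] t).NeBot → ∃ l : Φ →ₗ[ℝ] ℝ, MemDualOf q l ∧
      Tendsto (fun u => dualNorm q (f u - l)) (𝓝[s ∩ Iio t] t) (𝓝 0))

/-- The real-valued process `Z` has a version with continuous (resp. càdlàg) paths on `s`. -/
def HasPathVersion {Ω : Type*} [MeasurableSpace Ω] (P : Measure Ω) (cts : Bool)
    (Z : ℝ → Ω → ℝ) (s : Set ℝ) : Prop :=
  ∃ W : ℝ → Ω → ℝ, (∀ t ∈ s, Measurable (W t)) ∧
    (∀ᵐ ω ∂P, PathReg cts (fun t => W t ω) s) ∧ ∀ t ∈ s, ∀ᵐ ω ∂P, W t ω = Z t ω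

/-- If `Φ` is multi-Hilbertian and `X` is a regular `Φ'_β`-valued random
variable, then the map `φ ↦ X[φ]` from `Φ` into `L⁰(Ω,F,P)` is continuous. -/
theorem regular_implies_continuousInProb
    {Φ : Type*} [AddCommGroup Φ] [Module ℝ Φ] [TopologicalSpace Φ]
    [IsTopologicalAddGroup Φ] [ContinuousSMul ℝ Φ]
    {Ω : Type*} [MeasurableSpace Ω] (P : Measure Ω) [IsProbabilityMeasure P] [P.IsComplete]
    (hΦ : IsMultiHilbertian Φ)
    (X : Ω → (Φ →L[ℝ] ℝ))
    (hXmeas : BorelMeasurable X)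
    (hreg : IsRegularRV P X) :
    ContinuousInProb P (fun φ ω => X ω φ) := by
  obtain ⟨θ, hθ⟩ := hreg
  intro φ₀ ε hε
  -- work with δ = min ε (1/2)
  set δ : ℝ := min ε (1/2) with hδdef
  have hδpos : 0 < δ := lt_min hε (by norm_num)
  have hδε : δ ≤ ε := min_le_left _ _
  -- the measurable increasing sets A k
  letI : MeasurableSpace (Φ →L[ℝ] ℝ) := borel _
  haveI : BorelSpace (Φ →L[ℝ] ℝ) := ⟨rfl⟩
  set A : ℕ → Set Ω := fun k => X ⁻¹' {f : Φ →L[ℝ] ℝ | ∀ φ, |f φ| ≤ (k : ℝ) * θ.p k φ}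
    with hAdef
  have hAmeas : ∀ k, MeasurableSet (A k) := by
    intro k
    apply hXmeas
    have : IsClosed {f : Φ →L[ℝ] ℝ | ∀ φ, |f φ| ≤ (k : ℝ) * θ.p k φ} := by
      have : {f : Φ →L[ℝ] ℝ | ∀ φ, |f φ| ≤ (k : ℝ) * θ.p k φ} =
          ⋂ φ : Φ, {f : Φ →L[ℝ] ℝ | |f φ| ≤ (k : ℝ) * θ.p k φ} := by
        ext f; simp [Set.mem_iInter]
      rw [this]
      exact isClosed_iInter fun φ =>
        isClosed_le ((continuous_eval_const φ).abs) continuous_const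
    exact this.measurableSet
  have hAmono : Monotone A := by
    intro a b hab ω hω φ
    calc |X ω φ| ≤ (a : ℝ) * θ.p a φ := hω φ
      _ ≤ (b : ℝ) * θ.p b φ :=
        mul_le_mul (by exact_mod_cast hab) (θ.mono hab φ) (apply_nonneg _ _)
          (Nat.cast_nonneg _)
  -- the union has full measure
  have hsub : {ω | θ.MemDual ⇑(X ω)} ⊆ ⋃ k, A k := by
    intro ω hω
    obtain ⟨n, C, hC⟩ := hω
    set m : ℕ := max n ⌈C⌉₊ with hm
    refine Set.mem_iUnion.2 ⟨m, fun φ => ?_⟩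
    have hCm : C ≤ (m : ℝ) :=
      (Nat.le_ceil C).trans (Nat.cast_le.mpr (le_max_right n ⌈C⌉₊))
    calc |X ω φ| ≤ C * θ.p n φ := hC φ
      _ ≤ (m : ℝ) * θ.p m φ :=
          mul_le_mul hCm (θ.mono (le_max_left _ _) φ) (apply_nonneg _ _) (Nat.cast_nonneg _)
  have hunion : P (⋃ k, A k) = 1 := by
    have h0 : P (⋃ k, A k)ᶜ = 0 :=
      measure_mono_null (Set.compl_subset_compl.mpr hsub) (ae_iff.mp hθ)
    exact (prob_compl_eq_zero_iff (MeasurableSet.iUnion hAmeas)).mp h0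
  -- choose k with P (A k)ᶜ < ofReal δ
  have hiSup : ⨆ k, P (A k) = 1 := by
    rw [← hunion]; exact (hAmono.directed_le.measure_iUnion).symm
  have hlt : 1 - ENNReal.ofReal δ < ⨆ k, P (A k) := by
    rw [hiSup]
    exact ENNReal.sub_lt_self ENNReal.one_ne_top one_ne_zero
      (ENNReal.ofReal_pos.2 hδpos).ne'
  obtain ⟨k₀, hk₀⟩ := lt_iSup_iff.mp hlt
  set k := k₀ + 1 with hkdef
  have hk : 1 - ENNReal.ofReal δ < P (A k) :=
    hk₀.trans_le (measure_mono (hAmono (Nat.le_succ k₀)))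
  have hcompl : P (A k)ᶜ < ENNReal.ofReal δ := by
    have h1 : P (A k)ᶜ = 1 - P (A k) := prob_compl_eq_one_sub (hAmeas k)
    rw [h1]
    have hPle : P (A k) ≤ 1 := prob_le_one
    exact ENNReal.sub_lt_of_lt_add hPle
      (by simpa [add_comm] using ENNReal.lt_add_of_sub_lt_left (Or.inl ENNReal.one_ne_top) hk)
  have hkpos : (0 : ℝ) < (k : ℝ) := by positivity
  -- the neighborhood
  refine ⟨{φ | θ.p k (φ - φ₀) < δ / k}, ?_, ?_⟩
  · have hopen : IsOpen {φ | θ.p k (φ - φ₀) < δ / k} :=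
      isOpen_lt ((θ.cont k).comp (continuous_id.sub continuous_const)) continuous_const
    refine hopen.mem_nhds ?_
    simp only [Set.mem_setOf_eq, sub_self, map_zero]
    positivity
  · intro φ hφ
    have hsubset : {ω | ε ≤ |X ω φ - X ω φ₀|} ⊆ (A k)ᶜ := by
      intro ω hω hmem
      have hlin : X ω φ - X ω φ₀ = X ω (φ - φ₀) := (map_sub (X ω) φ φ₀).symm
      have hb : |X ω (φ - φ₀)| ≤ (k : ℝ) * θ.p k (φ - φ₀) := hmem (φ - φ₀)
      have : |X ω φ - X ω φ₀| < ε := by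
        rw [hlin]
        calc |X ω (φ - φ₀)| ≤ (k : ℝ) * θ.p k (φ - φ₀) := hb
          _ < (k : ℝ) * (δ / k) := by
              exact mul_lt_mul_of_pos_left hφ hkpos
          _ = δ := by field_simp
          _ ≤ ε := hδε
      exact absurd hω (not_le.mpr this)
    calc P {ω | ε ≤ |X ω φ - X ω φ₀|} ≤ P (A k)ᶜ := measure_mono hsubset
      _ < ENNReal.ofReal δ := hcompl
      _ ≤ ENNReal.ofReal ε := ENNReal.ofReal_le_ofReal hδε

end Paper
end
end

section
/- Let Φ be a multi-Hilbertian barrelled space and let X be a Φ'_β-valued random variable whose distribution μ_X is a Radon probability measure on Φ'_β. Then X is regular, i.e., there exists a weaker countably Hilbertian topology θ on Φ with P(ω : X(ω) ∈ Φ'_θ) = 1. -/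
open MeasureTheory Topology Filter Set
open scoped ENNReal NNReal

noncomputable section

namespace Paper

universe u

variable {Φ : Type*} [AddCommGroup Φ] [Module ℝ Φ]

section Auxiliary

variable {Φ' : Type*} [AddCommGroup Φ'] [Module ℝ Φ']

/-- Cauchy–Schwarz for a nonnegative symmetric bilinear form. -/
lemma quad_cauchy_schwarz (Q : Φ' →ₗ[ℝ] Φ' →ₗ[ℝ] ℝ) (hs : ∀ x y, Q x y = Q y x)
    (hpos : ∀ x, 0 ≤ Q x x) (x y : Φ') :
    Q x y ≤ Real.sqrt (Q x x) * Real.sqrt (Q y y) := by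
  have hdisc : discrim (Q y y) (2 * Q x y) (Q x x) ≤ 0 := by
    apply discrim_le_zero
    intro t
    have h0 := hpos (x + t • y)
    have hexp : Q (x + t • y) (x + t • y)
        = Q y y * (t * t) + 2 * Q x y * t + Q x x := by
      simp only [map_add, _root_.map_smul, LinearMap.add_apply, LinearMap.smul_apply,
        smul_eq_mul]
      rw [hs y x]; ring
    linarith [hexp ▸ h0]
  rw [discrim] at hdisc
  have hsq : (Q x y) ^ 2 ≤ Q x x * Q y y := by nlinarith
  calc Q x y ≤ |Q x y| := le_abs_self _
    _ = Real.sqrt ((Q x y) ^ 2) := (Real.sqrt_sq_eq_abs _).symm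
    _ ≤ Real.sqrt (Q x x * Q y y) := Real.sqrt_le_sqrt hsq
    _ = Real.sqrt (Q x x) * Real.sqrt (Q y y) := Real.sqrt_mul (hpos x) _

/-- The seminorm `x ↦ √(Q x x)` associated to a nonnegative symmetric bilinear form. -/
def quadSeminorm (Q : Φ' →ₗ[ℝ] Φ' →ₗ[ℝ] ℝ) (hs : ∀ x y, Q x y = Q y x)
    (hpos : ∀ x, 0 ≤ Q x x) : Seminorm ℝ Φ' :=
  Seminorm.of (fun x => Real.sqrt (Q x x))
    (fun x y => by
      have hexp : Q (x + y) (x + y) = Q x x + 2 * Q x y + Q y y := by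
        simp only [map_add, LinearMap.add_apply]
        rw [hs y x]; ring
      have hcs := quad_cauchy_schwarz Q hs hpos x y
      have hnx := Real.sqrt_nonneg (Q x x)
      have hny := Real.sqrt_nonneg (Q y y)
      have hx2 := Real.sq_sqrt (hpos x)
      have hy2 := Real.sq_sqrt (hpos y)
      have hle : Q (x + y) (x + y) ≤ (Real.sqrt (Q x x) + Real.sqrt (Q y y)) ^ 2 := by
        rw [hexp]; nlinarith
      calc Real.sqrt (Q (x + y) (x + y))
          ≤ Real.sqrt ((Real.sqrt (Q x x) + Real.sqrt (Q y y)) ^ 2) :=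
            Real.sqrt_le_sqrt hle
        _ = Real.sqrt (Q x x) + Real.sqrt (Q y y) := Real.sqrt_sq (by positivity))
    (fun a x => by
      have hexp : Q (a • x) (a • x) = a ^ 2 * Q x x := by
        simp only [_root_.map_smul, LinearMap.smul_apply, smul_eq_mul]; ring
      show Real.sqrt (Q (a • x) (a • x)) = ‖a‖ * Real.sqrt (Q x x)
      rw [hexp, Real.sqrt_mul (sq_nonneg a), Real.sqrt_sq_eq_abs, Real.norm_eq_abs])

lemma quadSeminorm_apply (Q : Φ' →ₗ[ℝ] Φ' →ₗ[ℝ] ℝ) (hs : ∀ x y, Q x y = Q y x)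
    (hpos : ∀ x, 0 ≤ Q x x) (x : Φ') :
    quadSeminorm Q hs hpos x = Real.sqrt (Q x x) := rfl

/-- Combination of two Hilbertian seminorms: `√(p² + q²)`. -/
def hilbCombine (p q : Seminorm ℝ Φ') (hp : IsHilbertian p) (hq : IsHilbertian q) :
    Seminorm ℝ Φ' :=
  quadSeminorm (hp.choose + hq.choose)
    (fun x y => by
      simp only [LinearMap.add_apply]
      rw [hp.choose_spec.1 x y, hq.choose_spec.1 x y])
    (fun x => by
      simp only [LinearMap.add_apply]
      exact add_nonneg (hp.choose_spec.2.1 x) (hq.choose_spec.2.1 x))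

lemma hilbCombine_apply (p q : Seminorm ℝ Φ') (hp : IsHilbertian p) (hq : IsHilbertian q)
    (x : Φ') : hilbCombine p q hp hq x = Real.sqrt (p x ^ 2 + q x ^ 2) := by
  have h1 := hp.choose_spec.2.2 x
  have h2 := hq.choose_spec.2.2 x
  rw [hilbCombine, quadSeminorm_apply]
  simp only [LinearMap.add_apply, ← h1, ← h2]

lemma hilbCombine_isHilbertian (p q : Seminorm ℝ Φ') (hp : IsHilbertian p)
    (hq : IsHilbertian q) : IsHilbertian (hilbCombine p q hp hq) := by
  refine ⟨hp.choose + hq.choose,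
    (fun x y => by
      simp only [LinearMap.add_apply]
      rw [hp.choose_spec.1 x y, hq.choose_spec.1 x y]),
    (fun x => by
      simp only [LinearMap.add_apply]
      exact add_nonneg (hp.choose_spec.2.1 x) (hq.choose_spec.2.1 x)), fun x => ?_⟩
  have hpos : (0:ℝ) ≤ (hp.choose + hq.choose) x x := by
    simp only [LinearMap.add_apply]
    exact add_nonneg (hp.choose_spec.2.1 x) (hq.choose_spec.2.1 x)
  rw [hilbCombine, quadSeminorm_apply, Real.sq_sqrt hpos]

lemma hilbCombine_left_le (p q : Seminorm ℝ Φ') (hp : IsHilbertian p) (hq : IsHilbertian q) :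
    p ≤ hilbCombine p q hp hq := by
  intro x
  show p x ≤ hilbCombine p q hp hq x
  rw [hilbCombine_apply]
  calc p x = Real.sqrt (p x ^ 2) := (Real.sqrt_sq (apply_nonneg p x)).symm
    _ ≤ Real.sqrt (p x ^ 2 + q x ^ 2) :=
        Real.sqrt_le_sqrt (le_add_of_nonneg_right (sq_nonneg _))

lemma hilbCombine_right_le (p q : Seminorm ℝ Φ') (hp : IsHilbertian p) (hq : IsHilbertian q) :
    q ≤ hilbCombine p q hp hq := by
  intro x
  show q x ≤ hilbCombine p q hp hq x
  rw [hilbCombine_apply]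
  calc q x = Real.sqrt (q x ^ 2) := (Real.sqrt_sq (apply_nonneg q x)).symm
    _ ≤ Real.sqrt (p x ^ 2 + q x ^ 2) :=
        Real.sqrt_le_sqrt (le_add_of_nonneg_left (sq_nonneg _))

lemma hilbCombine_le_add (p q : Seminorm ℝ Φ') (hp : IsHilbertian p) (hq : IsHilbertian q)
    (x : Φ') : hilbCombine p q hp hq x ≤ p x + q x := by
  rw [hilbCombine_apply]
  have h1 := apply_nonneg p x
  have h2 := apply_nonneg q x
  have : p x ^ 2 + q x ^ 2 ≤ (p x + q x) ^ 2 := by nlinarith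
  calc Real.sqrt (p x ^ 2 + q x ^ 2) ≤ Real.sqrt ((p x + q x) ^ 2) := Real.sqrt_le_sqrt this
    _ = p x + q x := Real.sqrt_sq (by positivity)

lemma hilbCombine_continuous [TopologicalSpace Φ'] (p q : Seminorm ℝ Φ')
    (hp : IsHilbertian p) (hq : IsHilbertian q) (hpc : Continuous ⇑p) (hqc : Continuous ⇑q) :
    Continuous ⇑(hilbCombine p q hp hq) := by
  have : ⇑(hilbCombine p q hp hq) = fun x => Real.sqrt (p x ^ 2 + q x ^ 2) :=
    funext fun x => hilbCombine_apply p q hp hq x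
  rw [this]
  exact Real.continuous_sqrt.comp ((hpc.pow 2).add (hqc.pow 2))

lemma hilbCombine_sep (p q : Seminorm ℝ Φ') (hp : IsHilbertian p) (hq : IsHilbertian q)
    (hsp : HasSeparableQuotient p) (hsq : HasSeparableQuotient q) :
    HasSeparableQuotient (hilbCombine p q hp hq) := by
  classical
  obtain ⟨Dp, hDpc, hDpd⟩ := hsp
  obtain ⟨Dq, hDqc, hDqd⟩ := hsq
  set g : Φ' × Φ' × ℕ → Φ' := fun t =>
    if h : ∃ x, p (x - t.1) < 1 / ((t.2.2 : ℝ) + 1) ∧ q (x - t.2.1) < 1 / ((t.2.2 : ℝ) + 1)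
    then h.choose else 0 with hg
  refine ⟨g '' (Dp ×ˢ Dq ×ˢ Set.univ),
    (hDpc.prod (hDqc.prod Set.countable_univ)).image g, ?_⟩
  intro x ε hε
  obtain ⟨n, hn⟩ := exists_nat_one_div_lt (show (0:ℝ) < ε / 4 by linarith)
  have hnpos : (0:ℝ) < 1 / ((n : ℝ) + 1) := by positivity
  obtain ⟨a, ha, hpa⟩ := hDpd x (1 / ((n : ℝ) + 1)) hnpos
  obtain ⟨b, hb, hqb⟩ := hDqd x (1 / ((n : ℝ) + 1)) hnpos
  have hex : ∃ z, p (z - a) < 1 / ((n : ℝ) + 1) ∧ q (z - b) < 1 / ((n : ℝ) + 1) := ⟨x, hpa, hqb⟩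
  refine ⟨g (a, b, n), ⟨(a, b, n), ⟨ha, hb, Set.mem_univ _⟩, rfl⟩, ?_⟩
  have hy : p (g (a, b, n) - a) < 1 / ((n : ℝ) + 1) ∧
      q (g (a, b, n) - b) < 1 / ((n : ℝ) + 1) := by
    rw [hg]; simp only []; rw [dif_pos hex]; exact hex.choose_spec
  set y := g (a, b, n)
  have h1 : p (x - y) ≤ p (x - a) + p (y - a) := by
    have hxy : x - y = (x - a) - (y - a) := by abel
    rw [hxy]; exact map_sub_le_add p _ _
  have h2 : q (x - y) ≤ q (x - b) + q (y - b) := by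
    have hxy : x - y = (x - b) - (y - b) := by abel
    rw [hxy]; exact map_sub_le_add q _ _
  have h3 := hilbCombine_le_add p q hp hq (x - y)
  have hn' : (1:ℝ) / ((n : ℝ) + 1) < ε / 4 := hn
  calc hilbCombine p q hp hq (x - y) ≤ p (x - y) + q (x - y) := h3
    _ < ε := by linarith [hy.1, hy.2]

lemma zero_isHilbertian : IsHilbertian (0 : Seminorm ℝ Φ') :=
  ⟨0, fun _ _ => rfl, fun x => le_of_eq rfl, fun x => by
    simp [Seminorm.zero_apply]⟩

lemma zero_hasSeparableQuotient : HasSeparableQuotient (0 : Seminorm ℝ Φ') :=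
  ⟨{0}, Set.countable_singleton 0, fun x ε hε => ⟨0, rfl, by simpa using hε⟩⟩

lemma zero_seminorm_continuous [TopologicalSpace Φ'] :
    Continuous ⇑(0 : Seminorm ℝ Φ') := by
  have : ⇑(0 : Seminorm ℝ Φ') = fun _ => (0:ℝ) := funext fun x => rfl
  rw [this]; exact continuous_const

/-- A finite collection of continuous Hilbertian separable seminorms is dominated by a
single continuous Hilbertian separable seminorm. -/
lemma exists_hilb_dominating {ι : Type} [TopologicalSpace Φ'] (fam : SeminormFamily ℝ Φ' ι)
    (hh : ∀ i, IsHilbertian (fam i)) (hsep : ∀ i, HasSeparableQuotient (fam i))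
    (hcont : ∀ i, Continuous ⇑(fam i)) (s : Finset ι) :
    ∃ r : Seminorm ℝ Φ', IsHilbertian r ∧ HasSeparableQuotient r ∧ Continuous ⇑r ∧
      ∀ i ∈ s, fam i ≤ r := by
  classical
  induction s using Finset.cons_induction with
  | empty =>
      exact ⟨0, zero_isHilbertian, zero_hasSeparableQuotient, zero_seminorm_continuous,
        fun i hi => absurd hi (Finset.notMem_empty i)⟩
  | cons a s ha ih =>
      obtain ⟨r, hr1, hr2, hr3, hr4⟩ := ih
      refine ⟨hilbCombine (fam a) r (hh a) hr1,
        hilbCombine_isHilbertian _ _ _ _,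
        hilbCombine_sep _ _ _ _ (hsep a) hr2,
        hilbCombine_continuous _ _ _ _ (hcont a) hr3, ?_⟩
      intro i hi
      rcases Finset.mem_cons.mp hi with rfl | hi
      · exact hilbCombine_left_le _ _ _ _
      · exact le_trans (hr4 i hi) (hilbCombine_right_le _ _ _ _)

end Auxiliary

/-- If `Φ` is a multi-Hilbertian barrelled space and the distribution
`μ_X` of the `Φ'_β`-valued random variable `X` is a Radon probability measure, then `X`
is regular. -/
theorem radon_distribution_implies_regular
    {Φ : Type*} [AddCommGroup Φ] [Module ℝ Φ] [TopologicalSpace Φ]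
    [IsTopologicalAddGroup Φ] [ContinuousSMul ℝ Φ]
    {Ω : Type*} [MeasurableSpace Ω] (P : Measure Ω) [IsProbabilityMeasure P] [P.IsComplete]
    (hΦ : IsMultiHilbertian Φ) (hbarrel : BarrelledSpace ℝ Φ)
    (X : Ω → (Φ →L[ℝ] ℝ))
    (hXmeas : BorelMeasurable X)
    (hradon : IsRadon (distributionOf P X)) :
    IsRegularRV P X := by
  classical
  obtain ⟨ι, hι, fam, hwith, hprops⟩ := hΦ
  haveI := hι
  haveI := hbarrel
  letI : MeasurableSpace (Φ →L[ℝ] ℝ) := borel _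
  haveI : BorelSpace (Φ →L[ℝ] ℝ) := ⟨rfl⟩
  have hXm : Measurable X := hXmeas
  -- a compact exhaustion carrying almost all of the distribution
  have hK : ∀ n : ℕ, ∃ K : Set (Φ →L[ℝ] ℝ), IsCompact K ∧
      distributionOf P X (Set.univ \ K) < ((n : ℝ≥0∞) + 1)⁻¹ := by
    intro n
    obtain ⟨K, _, hKc, hKm⟩ := hradon Set.univ MeasurableSet.univ ((n : ℝ≥0∞) + 1)⁻¹
      (ENNReal.inv_pos.mpr (by simp))
    exact ⟨K, hKc, hKm⟩
  choose K hKc hKμ using hK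
  -- each compact set is uniformly bounded by a single Hilbertian seminorm
  have key : ∀ n : ℕ, ∃ q : Seminorm ℝ Φ, IsHilbertian q ∧ HasSeparableQuotient q ∧
      Continuous ⇑q ∧ ∃ C : ℝ, 0 ≤ C ∧ ∀ f ∈ K n, ∀ φ : Φ, |f φ| ≤ C * q φ := by
    intro n
    set Kn := K n with hKn
    let pf : Kn → Seminorm ℝ Φ := fun f => (normSeminorm ℝ ℝ).comp (f : Φ →L[ℝ] ℝ).toLinearMap
    have hpw : ∀ φ : Φ, BddAbove (Set.range fun f : Kn => pf f φ) := by
      intro φ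
      have hcomp : IsCompact ((fun f : Φ →L[ℝ] ℝ => ‖f φ‖) '' Kn) :=
        (hKc n).image (continuous_norm.comp (continuous_eval_const φ))
      have hb := hcomp.bddAbove
      rw [Set.image_eq_range] at hb
      exact hb
    have hbdd : BddAbove (Set.range pf) := Seminorm.bddAbove_range_iff.mpr hpw
    have hQcont : Continuous ⇑(⨆ f : Kn, pf f) := by
      rw [Seminorm.coe_iSup_eq hbdd]
      exact Seminorm.continuous_iSup pf
        (fun f => continuous_norm.comp (f : Φ →L[ℝ] ℝ).continuous) hbdd
    obtain ⟨s, C0, hC0ne, hC0le⟩ := Seminorm.bound_of_continuous hwith _ hQcont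
    obtain ⟨r, hr1, hr2, hr3, hr4⟩ := exists_hilb_dominating fam (fun i => (hprops i).1)
      (fun i => (hprops i).2) (fun i => hwith.continuous_seminorm i) s
    refine ⟨r, hr1, hr2, hr3, (C0 : ℝ), C0.coe_nonneg, ?_⟩
    intro f hf φ
    have hcoe : ⇑(⨆ g : Kn, pf g) = ⨆ g : Kn, ⇑(pf g) := Seminorm.coe_iSup_eq hbdd
    have h1 : |f φ| ≤ (⨆ g : Kn, pf g) φ := by
      have hle := le_ciSup (hpw φ) (⟨f, hf⟩ : Kn)
      have happ : (⨆ g : Kn, pf g) φ = ⨆ g : Kn, pf g φ := by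
        rw [show ((⨆ g : Kn, pf g) φ : ℝ) = (⇑(⨆ g : Kn, pf g)) φ from rfl, hcoe]
        exact iSup_apply
      rw [happ]
      exact le_trans (le_of_eq (by simp [pf, Real.norm_eq_abs])) hle
    have h2 : (s.sup fam) φ ≤ r φ :=
      Seminorm.le_def.mp (Finset.sup_le fun i hi => hr4 i hi) φ
    calc |f φ| ≤ (⨆ g : Kn, pf g) φ := h1
      _ ≤ (C0 • s.sup fam) φ := Seminorm.le_def.mp hC0le φ
      _ = (C0 : ℝ) * (s.sup fam) φ := by
          simp [NNReal.smul_def, smul_eq_mul]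
      _ ≤ (C0 : ℝ) * r φ := mul_le_mul_of_nonneg_left h2 C0.coe_nonneg
  choose q hq1 hq2 hq3 C hC0 hC using key
  -- the increasing sequence of Hilbertian seminorms
  let rf : ℕ → {u : Seminorm ℝ Φ // IsHilbertian u ∧ HasSeparableQuotient u ∧ Continuous ⇑u} :=
    fun n => Nat.rec ⟨q 0, hq1 0, hq2 0, hq3 0⟩
      (fun m prev => ⟨hilbCombine prev.1 (q (m + 1)) prev.2.1 (hq1 (m + 1)),
        hilbCombine_isHilbertian _ _ _ _,
        hilbCombine_sep _ _ _ _ prev.2.2.1 (hq2 (m + 1)),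
        hilbCombine_continuous _ _ _ _ prev.2.2.2 (hq3 (m + 1))⟩) n
  have hrf_succ : ∀ n, (rf (n + 1)).1
      = hilbCombine (rf n).1 (q (n + 1)) (rf n).2.1 (hq1 (n + 1)) := fun n => rfl
  have hmono : Monotone fun n => (rf n).1 := monotone_nat_of_le_succ fun n => by
    rw [hrf_succ n]; exact hilbCombine_left_le _ _ _ _
  have hqle : ∀ n, q n ≤ (rf n).1 := by
    intro n
    cases n with
    | zero => exact le_refl _
    | succ m => rw [hrf_succ m]; exact hilbCombine_right_le _ _ _ _
  -- the null set
  have hnull : P {ω | ¬ ∃ n, X ω ∈ K n} = 0 := by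
    have hle : ∀ n : ℕ, P {ω | ¬ ∃ m, X ω ∈ K m} ≤ ((n : ℝ≥0∞) + 1)⁻¹ := by
      intro n
      have hsub : {ω | ¬ ∃ m, X ω ∈ K m} ⊆ X ⁻¹' (K n)ᶜ := fun ω hω hmem => hω ⟨n, hmem⟩
      calc P {ω | ¬ ∃ m, X ω ∈ K m} ≤ P (X ⁻¹' (K n)ᶜ) := measure_mono hsub
        _ = distributionOf P X ((K n)ᶜ) :=
            (Measure.map_apply hXm ((hKc n).isClosed.measurableSet.compl)).symm
        _ = distributionOf P X (Set.univ \ K n) := by rw [Set.compl_eq_univ_diff]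
        _ ≤ ((n : ℝ≥0∞) + 1)⁻¹ := (hKμ n).le
    by_contra hne
    obtain ⟨m, hm⟩ := ENNReal.exists_inv_nat_lt hne
    have h2 : ((m : ℝ≥0∞) + 1)⁻¹ ≤ ((m : ℝ≥0∞))⁻¹ := by
      gcongr
      exact le_self_add
    exact ((hle m).trans h2).not_gt hm
  have hae : ∀ᵐ ω ∂P, ∃ n, X ω ∈ K n := by
    rw [ae_iff]
    exact hnull
  refine ⟨⟨fun n => (rf n).1, hmono, fun n => (rf n).2.1, fun n => (rf n).2.2.1,
    fun n => (rf n).2.2.2⟩, ?_⟩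
  filter_upwards [hae] with ω hω
  obtain ⟨n, hn⟩ := hω
  refine ⟨n, C n, fun φ => ?_⟩
  calc |(X ω) φ| ≤ C n * q n φ := hC n (X ω) hn φ
    _ ≤ C n * (rf n).1 φ :=
        mul_le_mul_of_nonneg_left (Seminorm.le_def.mp (hqle n) φ) (hC0 n)

end Paper
end
end

section
/- Let Φ be a multi-Hilbertian space and let X, Y be Φ'_β-valued regular random variables. Then X = Y P-a.e. if and only if for every φ ∈ Φ, X[φ] = Y[φ] P-a.e. -/
open MeasureTheory Topology Filter Set
open scoped ENNReal NNReal

noncomputable section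

namespace Paper

universe u

variable {Φ : Type*} [AddCommGroup Φ] [Module ℝ Φ]

/-- Two seminorms with separable quotients admit a joint countable dense set. -/
lemma joint_separable {Φ : Type*} [AddCommGroup Φ] [Module ℝ Φ]
    (p q : Seminorm ℝ Φ) (hp : HasSeparableQuotient p) (hq : HasSeparableQuotient q) :
    ∃ D : Set Φ, D.Countable ∧ ∀ x : Φ, ∀ ε : ℝ, 0 < ε →
      ∃ y ∈ D, p (x - y) < ε ∧ q (x - y) < ε := by
  classical
  obtain ⟨Dp, hDpc, hDp⟩ := hp
  obtain ⟨Dq, hDqc, hDq⟩ := hq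
  set S : Φ → Φ → ℕ → Set Φ :=
    fun a b k => {φ | p (φ - a) < 1 / (k + 1) ∧ q (φ - b) < 1 / (k + 1)} with hS
  set f : Φ → Φ → ℕ → Φ :=
    fun a b k => if h : (S a b k).Nonempty then h.choose else 0 with hf
  refine ⟨(fun t : Φ × Φ × ℕ => f t.1 t.2.1 t.2.2) '' (Dp ×ˢ Dq ×ˢ (univ : Set ℕ)),
    (hDpc.prod (hDqc.prod countable_univ)).image _, ?_⟩
  intro x ε hε
  obtain ⟨k, hk⟩ := exists_nat_one_div_lt (show (0:ℝ) < ε / 2 by linarith)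
  have hk1 : (0:ℝ) < 1 / (k + 1) := by positivity
  obtain ⟨a, haD, ha⟩ := hDp x (1 / (k + 1)) hk1
  obtain ⟨b, hbD, hb⟩ := hDq x (1 / (k + 1)) hk1
  have hne : (S a b k).Nonempty := ⟨x, ha, hb⟩
  have hy : f a b k ∈ S a b k := by
    rw [hf]; simp only [hne, dif_pos]; exact hne.choose_spec
  refine ⟨f a b k, ⟨(a, b, k), ⟨haD, hbD, mem_univ _⟩, rfl⟩, ?_, ?_⟩
  · have := hy.1
    calc p (x - f a b k) ≤ p (x - a) + p (f a b k - a) := by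
          have : x - f a b k = (x - a) - (f a b k - a) := by abel
          rw [this]; simpa [map_sub_rev] using map_sub_le_add p (x - a) (f a b k - a)
      _ < 1 / (k + 1) + 1 / (k + 1) := by
          have := hy.1; linarith [ha]
      _ ≤ ε := by linarith
  · calc q (x - f a b k) ≤ q (x - b) + q (f a b k - b) := by
          have : x - f a b k = (x - b) - (f a b k - b) := by abel
          rw [this]; simpa [map_sub_rev] using map_sub_le_add q (x - b) (f a b k - b)
      _ < 1 / (k + 1) + 1 / (k + 1) := by
          have := hy.2; linarith [hb]
      _ ≤ ε := by linarith

/-- If `Φ` is multi-Hilbertian and `X`, `Y` are regular `Φ'_β`-valued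
random variables, then `X = Y` `P`-a.e. iff `X[φ] = Y[φ]` `P`-a.e. for every `φ ∈ Φ`. -/
theorem regular_ae_eq_iff_cylindrical_ae_eq
    {Φ : Type*} [AddCommGroup Φ] [Module ℝ Φ] [TopologicalSpace Φ]
    [IsTopologicalAddGroup Φ] [ContinuousSMul ℝ Φ]
    {Ω : Type*} [MeasurableSpace Ω] (P : Measure Ω) [IsProbabilityMeasure P] [P.IsComplete]
    (hΦ : IsMultiHilbertian Φ)
    (X Y : Ω → (Φ →L[ℝ] ℝ))
    (hXmeas : BorelMeasurable X) (hYmeas : BorelMeasurable Y)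
    (hXreg : IsRegularRV P X) (hYreg : IsRegularRV P Y) :
    (∀ᵐ ω ∂P, X ω = Y ω) ↔ ∀ φ : Φ, ∀ᵐ ω ∂P, X ω φ = Y ω φ := by
  classical
  constructor
  · intro h φ
    filter_upwards [h] with ω hω
    rw [hω]
  · intro h
    obtain ⟨θX, hθX⟩ := hXreg
    obtain ⟨θY, hθY⟩ := hYreg
    choose D hDc hD using fun nm : ℕ × ℕ =>
      joint_separable (θX.p nm.1) (θY.p nm.2) (θX.sep nm.1) (θY.sep nm.2)
    set Dall : Set Φ := ⋃ nm, D nm with hDall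
    have hDallc : Dall.Countable := countable_iUnion hDc
    have hAll : ∀ᵐ ω ∂P, ∀ φ ∈ Dall, X ω φ = Y ω φ :=
      (ae_ball_iff hDallc).mpr fun φ _ => h φ
    filter_upwards [hAll, hθX, hθY] with ω hω hXω hYω
    obtain ⟨n, C₁, hC₁⟩ := hXω
    obtain ⟨m, C₂, hC₂⟩ := hYω
    ext φ
    by_contra hne
    have hpos : 0 < |X ω φ - Y ω φ| := abs_pos.mpr (sub_ne_zero.mpr hne)
    set ε : ℝ := |X ω φ - Y ω φ| / (|C₁| + |C₂| + 1) with hεdef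
    have hεpos : 0 < ε := by positivity
    obtain ⟨y, hyD, hy1, hy2⟩ := hD (n, m) φ ε hεpos
    have hyDall : y ∈ Dall := mem_iUnion.mpr ⟨(n, m), hyD⟩
    have hXY : X ω y = Y ω y := hω y hyDall
    have hdiff : X ω φ - Y ω φ = X ω (φ - y) - Y ω (φ - y) := by
      simp only [map_sub]
      rw [hXY]; ring
    have hb1 : |X ω (φ - y)| ≤ |C₁| * ε := by
      calc |X ω (φ - y)| ≤ C₁ * θX.p n (φ - y) := hC₁ _
        _ ≤ |C₁| * θX.p n (φ - y) :=
            mul_le_mul_of_nonneg_right (le_abs_self _) (apply_nonneg _ _)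
        _ ≤ |C₁| * ε := mul_le_mul_of_nonneg_left hy1.le (abs_nonneg _)
    have hb2 : |Y ω (φ - y)| ≤ |C₂| * ε := by
      calc |Y ω (φ - y)| ≤ C₂ * θY.p m (φ - y) := hC₂ _
        _ ≤ |C₂| * θY.p m (φ - y) :=
            mul_le_mul_of_nonneg_right (le_abs_self _) (apply_nonneg _ _)
        _ ≤ |C₂| * ε := mul_le_mul_of_nonneg_left hy2.le (abs_nonneg _)
    have hlt : |X ω φ - Y ω φ| ≤ (|C₁| + |C₂|) * ε := by
      rw [hdiff]
      calc |X ω (φ - y) - Y ω (φ - y)| ≤ |X ω (φ - y)| + |Y ω (φ - y)| := abs_sub _ _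
        _ ≤ (|C₁| + |C₂|) * ε := by linarith
    have hεlt : (|C₁| + |C₂|) * ε < |X ω φ - Y ω φ| := by
      have hεd : ε * (|C₁| + |C₂| + 1) = |X ω φ - Y ω φ| :=
        div_mul_cancel₀ _ (by positivity)
      nlinarith [hεpos]
    linarith

end Paper
end
end

section
/- Let Φ be a nuclear space, T > 0, and let X = {X_t}_{t∈[0,T]} be a cylindrical process in Φ' such that the family {X_t : t ∈ [0,T]} of linear maps Φ → L⁰(Ω,F,P) is equicontinuous, and for each φ ∈ Φ let X̂(φ) = {X̂_t(φ)}_{t∈[0,T]} be a continuous version of X(φ). Then there exists a weaker countably Hilbertian topology θ on Φ such that the family of linear maps {X̂_t : t ∈ [0,T]} from Φ into L⁰(Ω,F,P) is θ-equicontinuous. -/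
open MeasureTheory Topology Filter Set
open scoped ENNReal NNReal

noncomputable section

namespace Paper

universe u

variable {Φ : Type*} [AddCommGroup Φ] [Module ℝ Φ]

/-! ### Auxiliary development for the proof -/

section AuxSep

/-- monotonicity transfer of separable quotient. -/
lemma sep_mono {p p' : Seminorm ℝ Φ} (h : ∀ x, p' x ≤ p x)
    (hp : HasSeparableQuotient p) : HasSeparableQuotient p' := by
  obtain ⟨D, hD, hdense⟩ := hp
  refine ⟨D, hD, fun x ε hε => ?_⟩
  obtain ⟨y, hy, hlt⟩ := hdense x ε hε
  exact ⟨y, hy, lt_of_le_of_lt (h _) hlt⟩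

/-- binary combination for separable quotients. -/
lemma sep_add {p r p' : Seminorm ℝ Φ} (hp : HasSeparableQuotient p)
    (hr : HasSeparableQuotient r) (h : ∀ x, p' x ≤ p x + r x) :
    HasSeparableQuotient p' := by
  classical
  obtain ⟨D₁, hD₁, hd₁⟩ := hp
  obtain ⟨D₂, hD₂, hd₂⟩ := hr
  set f : Φ × Φ × ℕ → Φ := fun t =>
    if h : ∃ z, p (z - t.1) < 1 / (t.2.2 + 1) ∧ r (z - t.2.1) < 1 / (t.2.2 + 1)
    then h.choose else 0 with hf
  refine ⟨f '' (D₁ ×ˢ D₂ ×ˢ (Set.univ : Set ℕ)), (hD₁.prod (hD₂.prod (Set.countable_univ))).image f,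
    fun x ε hε => ?_⟩
  obtain ⟨n, hn⟩ := exists_nat_one_div_lt (show (0:ℝ) < ε / 4 by linarith)
  have hn1 : (0:ℝ) < 1 / (n + 1) := by positivity
  obtain ⟨a, ha, hpa⟩ := hd₁ x _ hn1
  obtain ⟨b, hb, hrb⟩ := hd₂ x _ hn1
  have hex : ∃ z, p (z - a) < 1 / ((n:ℝ) + 1) ∧ r (z - b) < 1 / ((n:ℝ) + 1) :=
    ⟨x, hpa, hrb⟩
  refine ⟨f (a, b, n), ⟨(a, b, n), ⟨ha, hb, trivial⟩, rfl⟩, ?_⟩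
  have hz : p (f (a, b, n) - a) < 1 / ((n:ℝ) + 1) ∧ r (f (a, b, n) - b) < 1 / ((n:ℝ) + 1) := by
    simp only [hf, dif_pos hex]
    exact hex.choose_spec
  set z := f (a, b, n)
  have h1 : p (x - z) ≤ p (x - a) + p (z - a) := by
    have : x - z = (x - a) - (z - a) := by abel
    rw [this]
    exact (map_sub_le_add p _ _)
  have h2 : r (x - z) ≤ r (x - b) + r (z - b) := by
    have : x - z = (x - b) - (z - b) := by abel
    rw [this]
    exact (map_sub_le_add r _ _)
  have := h (x - z)
  have hfin : p' (x - z) < 4 * (1 / ((n:ℝ) + 1)) := by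
    have := hz.1; have := hz.2
    linarith
  have : 4 * (1 / ((n:ℝ) + 1)) < ε := by linarith
  linarith



variable {ι : Type*}

/-- the seminorm `x ↦ sqrt (∑ i in s, (fam i x)^2)`. -/
def sqSum (fam : ι → Seminorm ℝ Φ) (s : Finset ι) : Seminorm ℝ Φ :=
  Seminorm.of (fun x => Real.sqrt (∑ i ∈ s, (fam i x) ^ 2))
    (by
      intro x y
      have hA : (0:ℝ) ≤ Real.sqrt (∑ i ∈ s, (fam i x) ^ 2) := Real.sqrt_nonneg _
      have hB : (0:ℝ) ≤ Real.sqrt (∑ i ∈ s, (fam i y) ^ 2) := Real.sqrt_nonneg _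
      set A := Real.sqrt (∑ i ∈ s, (fam i x) ^ 2) with hA'
      set B := Real.sqrt (∑ i ∈ s, (fam i y) ^ 2) with hB'
      have hA2 : A ^ 2 = ∑ i ∈ s, (fam i x) ^ 2 := by
        rw [hA', Real.sq_sqrt]; positivity
      have hB2 : B ^ 2 = ∑ i ∈ s, (fam i y) ^ 2 := by
        rw [hB', Real.sq_sqrt]; positivity
      rw [show A + B = Real.sqrt ((A + B)^2) by
        rw [Real.sqrt_sq (by positivity)]]
      apply Real.sqrt_le_sqrt
      have hcs : (∑ i ∈ s, fam i x * fam i y) ^ 2 ≤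
          (∑ i ∈ s, (fam i x) ^ 2) * (∑ i ∈ s, (fam i y) ^ 2) :=
        Finset.sum_mul_sq_le_sq_mul_sq s _ _
      have hcs' : ∑ i ∈ s, fam i x * fam i y ≤ A * B := by
        have h1 : (0:ℝ) ≤ A * B := by positivity
        nlinarith [hcs, hA2, hB2]
      have hterm : ∀ i ∈ s, (fam i (x + y)) ^ 2 ≤
          (fam i x) ^ 2 + 2 * (fam i x * fam i y) + (fam i y) ^ 2 := by
        intro i _
        have h1 := map_add_le_add (fam i) x y
        have h2 : (0:ℝ) ≤ fam i (x + y) := apply_nonneg _ _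
        nlinarith
      calc ∑ i ∈ s, (fam i (x + y)) ^ 2
          ≤ ∑ i ∈ s, ((fam i x) ^ 2 + 2 * (fam i x * fam i y) + (fam i y) ^ 2) :=
            Finset.sum_le_sum hterm
        _ = (∑ i ∈ s, (fam i x) ^ 2) + 2 * (∑ i ∈ s, fam i x * fam i y)
            + (∑ i ∈ s, (fam i y) ^ 2) := by
            rw [Finset.sum_add_distrib, Finset.sum_add_distrib, Finset.mul_sum]
        _ ≤ (A + B) ^ 2 := by nlinarith)
    (by
      intro a x
      show Real.sqrt (∑ i ∈ s, (fam i (a • x)) ^ 2) = ‖a‖ * Real.sqrt (∑ i ∈ s, (fam i x) ^ 2)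
      have : ∀ i ∈ s, (fam i (a • x)) ^ 2 = ‖a‖ ^ 2 * (fam i x) ^ 2 := by
        intro i _
        rw [map_smul_eq_mul]; ring
      rw [Finset.sum_congr rfl this, ← Finset.mul_sum, Real.sqrt_mul (by positivity),
        Real.sqrt_sq (norm_nonneg a)])

lemma sqSum_apply (fam : ι → Seminorm ℝ Φ) (s : Finset ι) (x : Φ) :
    sqSum fam s x = Real.sqrt (∑ i ∈ s, (fam i x) ^ 2) := rfl

lemma le_sqSum (fam : ι → Seminorm ℝ Φ) {s : Finset ι} {i : ι} (hi : i ∈ s) (x : Φ) :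
    fam i x ≤ sqSum fam s x := by
  rw [sqSum_apply]
  have : (fam i x) ^ 2 ≤ ∑ j ∈ s, (fam j x) ^ 2 :=
    Finset.single_le_sum (f := fun j => (fam j x) ^ 2) (fun j _ => by positivity) hi
  calc fam i x = Real.sqrt ((fam i x) ^ 2) := by
        rw [Real.sqrt_sq (apply_nonneg _ _)]
    _ ≤ _ := Real.sqrt_le_sqrt this

lemma sqSum_mono (fam : ι → Seminorm ℝ Φ) {s t : Finset ι} (hst : s ⊆ t) :
    sqSum fam s ≤ sqSum fam t := by
  intro x
  exact Real.sqrt_le_sqrt (Finset.sum_le_sum_of_subset_of_nonneg hst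
    (fun i _ _ => by positivity))

lemma sqSum_le_sum (fam : ι → Seminorm ℝ Φ) (s : Finset ι) (x : Φ) :
    sqSum fam s x ≤ ∑ i ∈ s, fam i x := by
  rw [sqSum_apply]
  rw [show (∑ i ∈ s, fam i x) = Real.sqrt ((∑ i ∈ s, fam i x)^2) by
    rw [Real.sqrt_sq (Finset.sum_nonneg (fun i _ => apply_nonneg _ _))]]
  apply Real.sqrt_le_sqrt
  calc ∑ i ∈ s, (fam i x) ^ 2 ≤ ∑ i ∈ s, fam i x * (∑ j ∈ s, fam j x) := by
        apply Finset.sum_le_sum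
        intro i hi
        have h1 : fam i x ≤ ∑ j ∈ s, fam j x :=
          Finset.single_le_sum (fun j _ => apply_nonneg _ _) hi
        have h2 : (0:ℝ) ≤ fam i x := apply_nonneg _ _
        nlinarith
    _ = (∑ i ∈ s, fam i x) ^ 2 := by rw [← Finset.sum_mul]; ring



section GS
variable (Q : Φ →ₗ[ℝ] Φ →ₗ[ℝ] ℝ) (x : ℕ → Φ)

/-- one Gram-Schmidt step given the previously constructed vectors. -/
def gsStep (v : ℕ → Φ) (n : ℕ) : Φ :=
  let r := x n - ∑ i ∈ Finset.range n, Q (v i) (x n) • v i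
  if Q r r = 0 then 0 else (Real.sqrt (Q r r))⁻¹ • r

def gsAux : ℕ → (ℕ → Φ)
  | 0 => fun _ => 0
  | (n + 1) => fun m => if m = n then gsStep Q x (gsAux n) n else gsAux n m

/-- the Gram-Schmidt sequence. -/
def gs (n : ℕ) : Φ := gsAux Q x (n + 1) n

lemma gsAux_stable : ∀ {n m : ℕ}, m < n → gsAux Q x n m = gs Q x m := by
  intro n
  induction n with
  | zero => intro m hm; omega
  | succ n ih =>
    intro m hm
    rcases Nat.lt_succ_iff_lt_or_eq.mp hm with h | h
    · show (if m = n then _ else gsAux Q x n m) = gs Q x m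
      rw [if_neg (by omega)]
      exact ih h
    · subst h; rfl

lemma gsStep_congr (v v' : ℕ → Φ) (n : ℕ) (h : ∀ i < n, v i = v' i) :
    gsStep Q x v n = gsStep Q x v' n := by
  unfold gsStep
  have : ∑ i ∈ Finset.range n, Q (v i) (x n) • v i
      = ∑ i ∈ Finset.range n, Q (v' i) (x n) • v' i := by
    apply Finset.sum_congr rfl
    intro i hi
    rw [h i (Finset.mem_range.mp hi)]
  simp only [this]

lemma gs_eq (n : ℕ) : gs Q x n = gsStep Q x (gs Q x) n := by
  show gsAux Q x (n + 1) n = _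
  show (if n = n then gsStep Q x (gsAux Q x n) n else _) = _
  rw [if_pos rfl]
  exact gsStep_congr Q x _ _ n (fun i hi => gsAux_stable Q x hi)

/-- Cauchy-Schwarz. -/
lemma cs (hsymm : ∀ a b, Q a b = Q b a) (hpos : ∀ a, 0 ≤ Q a a) (a b : Φ) :
    (Q a b) ^ 2 ≤ Q a a * Q b b := by
  have h : ∀ t : ℝ, 0 ≤ Q b b * (t * t) + (2 * Q a b) * t + Q a a := by
    intro t
    have h0 := hpos (a + t • b)
    have e1 : Q (a + t • b) (a + t • b) = Q a a + 2 * Q a b * t + Q b b * (t * t) := by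
      simp only [map_add, LinearMap.map_smul, LinearMap.add_apply, LinearMap.smul_apply,
        smul_eq_mul]
      rw [hsymm b a]; ring
    rw [e1] at h0
    linarith
  have := discrim_le_zero h
  rw [discrim] at this
  nlinarith

lemma null_orth (hsymm : ∀ a b, Q a b = Q b a) (hpos : ∀ a, 0 ≤ Q a a)
    {w : Φ} (hw : Q w w = 0) (a : Φ) : Q a w = 0 := by
  have := cs Q hsymm hpos a w
  rw [hw, mul_zero] at this
  nlinarith [sq_nonneg (Q a w)]

variable (hsymm : ∀ a b, Q a b = Q b a) (hpos : ∀ a, 0 ≤ Q a a)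

include hpos in
lemma gs_norm (n : ℕ) : gs Q x n = 0 ∨ Q (gs Q x n) (gs Q x n) = 1 := by
  rw [gs_eq]
  unfold gsStep
  set r := x n - ∑ i ∈ Finset.range n, Q (gs Q x i) (x n) • gs Q x i with hr
  by_cases h : Q r r = 0
  · left; rw [if_pos h]
  · right
    rw [if_neg h]
    have hQr : 0 < Q r r := lt_of_le_of_ne (hpos r) (Ne.symm h)
    simp only [LinearMap.map_smul, LinearMap.smul_apply, smul_eq_mul]
    rw [show ((Real.sqrt (Q r r))⁻¹ * ((Real.sqrt (Q r r))⁻¹ * Q r r)) =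
      (Q r r) / (Real.sqrt (Q r r) * Real.sqrt (Q r r)) by ring]
    rw [Real.mul_self_sqrt (le_of_lt hQr)]
    exact div_self (ne_of_gt hQr)

include hsymm hpos

lemma gs_orth : ∀ n m : ℕ, m < n → Q (gs Q x m) (gs Q x n) = 0 := by
  intro n
  induction n using Nat.strong_induction_on with
  | _ n ih =>
    intro m hmn
    rw [gs_eq Q x n]
    unfold gsStep
    set r := x n - ∑ i ∈ Finset.range n, Q (gs Q x i) (x n) • gs Q x i with hr
    by_cases h : Q r r = 0
    · rw [if_pos h, map_zero]
    · rw [if_neg h]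
      have hQmr : Q (gs Q x m) r = 0 := by
        rw [hr]
        simp only [map_sub, map_sum, LinearMap.map_smul, LinearMap.sub_apply,
          LinearMap.sum_apply, LinearMap.smul_apply, smul_eq_mul]
        have hsum : ∑ i ∈ Finset.range n, Q (gs Q x i) (x n) * Q (gs Q x m) (gs Q x i)
            = Q (gs Q x m) (x n) * Q (gs Q x m) (gs Q x m) := by
          rw [Finset.sum_eq_single m]
          · intro i hi hne
            have hin : i < n := Finset.mem_range.mp hi
            have : Q (gs Q x m) (gs Q x i) = 0 := by
              rcases lt_or_gt_of_ne hne with h1 | h1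
              · rw [hsymm]; exact ih m hmn i h1
              · exact ih i hin m h1
            rw [this, mul_zero]
          · intro hm; exact absurd (Finset.mem_range.mpr hmn) hm
        rw [hsum]
        rcases gs_norm Q x hpos m with h0 | h1
        · rw [h0]; simp
        · rw [h1, mul_one, sub_self]
      rw [LinearMap.map_smul, hQmr, smul_zero]

/-- orthogonality for distinct indices, both ways. -/
lemma gs_orth' {i j : ℕ} (hij : i ≠ j) : Q (gs Q x i) (gs Q x j) = 0 := by
  rcases lt_or_gt_of_ne hij with h | h
  · exact gs_orth Q x hsymm hpos j i h
  · rw [hsymm]; exact gs_orth Q x hsymm hpos i j h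

lemma gs_coeff_bessel (s : Finset ℕ) (n : ℕ) :
    ∑ i ∈ s, (Q (gs Q x i) (x n)) ^ 2 ≤ Q (x n) (x n) := by
  classical
  set e := gs Q x with he
  set c : ℕ → ℝ := fun i => Q (e i) (x n) with hc
  have hQsum : ∀ z, Q (∑ i ∈ s, c i • e i) z = ∑ i ∈ s, c i * Q (e i) z := by
    intro z
    rw [map_sum, LinearMap.sum_apply]
    apply Finset.sum_congr rfl
    intro i _
    rw [LinearMap.map_smul, LinearMap.smul_apply, smul_eq_mul]
  have hdiag : ∀ i, c i * (c i * Q (e i) (e i)) = c i ^ 2 := by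
    intro i
    rcases gs_norm Q x hpos i with h0 | h1
    · have : c i = 0 := by simp only [hc]; rw [show e i = 0 from h0]; simp
      rw [this]; ring
    · rw [h1]; ring
  have hSS : Q (∑ i ∈ s, c i • e i) (∑ j ∈ s, c j • e j) = ∑ i ∈ s, c i ^ 2 := by
    rw [hQsum]
    apply Finset.sum_congr rfl
    intro i hi
    rw [map_sum]
    have : ∑ j ∈ s, Q (e i) (c j • e j) = c i * Q (e i) (e i) := by
      rw [Finset.sum_eq_single i]
      · rw [LinearMap.map_smul, smul_eq_mul]
      · intro j hj hne
        rw [LinearMap.map_smul, smul_eq_mul, gs_orth' Q x hsymm hpos (Ne.symm hne), mul_zero]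
      · intro h; exact absurd hi h
    rw [this, hdiag i]
  have hSx : Q (∑ i ∈ s, c i • e i) (x n) = ∑ i ∈ s, c i ^ 2 := by
    rw [hQsum]
    apply Finset.sum_congr rfl
    intro i _
    simp only [hc]; ring
  have hxS : Q (x n) (∑ i ∈ s, c i • e i) = ∑ i ∈ s, c i ^ 2 := by
    rw [hsymm]; exact hSx
  have h0 := hpos (x n - ∑ i ∈ s, c i • e i)
  have hexp : Q (x n - ∑ i ∈ s, c i • e i) (x n - ∑ i ∈ s, c i • e i)
      = Q (x n) (x n) - ∑ i ∈ s, c i ^ 2 := by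
    simp only [map_sub, LinearMap.sub_apply]
    rw [hSx, hxS, hSS]; ring
  rw [hexp] at h0
  simp only [hc] at h0 ⊢
  linarith

/-- representation: `x n` lies in the span of `e_0 .. e_n` up to a null vector. -/
lemma gs_rep (n : ℕ) : ∃ w : Φ, Q w w = 0 ∧
    x n = (∑ i ∈ Finset.range (n + 1), Q (gs Q x i) (x n) • gs Q x i) + w := by
  classical
  set e := gs Q x with he
  have heq := gs_eq Q x n
  unfold gsStep at heq
  set r := x n - ∑ i ∈ Finset.range n, Q (e i) (x n) • e i with hr
  by_cases h : Q r r = 0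
  · refine ⟨r, h, ?_⟩
    rw [Finset.sum_range_succ]
    have hen : e n = 0 := by rw [he, heq, if_pos h]
    rw [hen, smul_zero, add_zero]
    rw [hr]; abel
  · refine ⟨0, by simp, ?_⟩
    rw [add_zero, Finset.sum_range_succ]
    have hQr : 0 < Q r r := lt_of_le_of_ne (hpos r) (Ne.symm h)
    have hen : e n = (Real.sqrt (Q r r))⁻¹ • r := by rw [he, heq, if_neg h]
    have hsq : Real.sqrt (Q r r) ≠ 0 := by positivity
    -- compute the n-th coefficient
    have hQer : Q (e n) (x n) = Real.sqrt (Q r r) := by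
      have h1 : Q (e n) (x n) = Q (e n) r + ∑ i ∈ Finset.range n, Q (e i) (x n) * Q (e n) (e i) := by
        rw [hr]
        simp only [map_sub, map_sum, LinearMap.map_smul, LinearMap.sub_apply,
          LinearMap.sum_apply, LinearMap.smul_apply, smul_eq_mul]
        ring
      have h2 : ∀ i ∈ Finset.range n, Q (e i) (x n) * Q (e n) (e i) = 0 := by
        intro i hi
        rw [gs_orth' Q x hsymm hpos (Nat.ne_of_gt (Finset.mem_range.mp hi)), mul_zero]
      rw [h1, Finset.sum_congr rfl h2, Finset.sum_const_zero, add_zero]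
      rw [hen, LinearMap.map_smul, LinearMap.smul_apply, smul_eq_mul]
      rw [show ((Real.sqrt (Q r r))⁻¹ * Q r r) = Q r r / Real.sqrt (Q r r) by ring]
      rw [Real.div_sqrt]
    rw [hQer, hen, smul_smul, mul_inv_cancel₀ hsq, one_smul, hr]
    abel

/-- coefficients vanish beyond the index. -/
lemma gs_coeff_zero {n i : ℕ} (hni : n < i) : Q (gs Q x i) (x n) = 0 := by
  obtain ⟨w, hw, hrep⟩ := gs_rep Q x hsymm hpos n
  rw [hrep]
  simp only [map_add, map_sum, LinearMap.map_smul, LinearMap.add_apply,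
    LinearMap.sum_apply, LinearMap.smul_apply, smul_eq_mul]
  have h1 : ∀ j ∈ Finset.range (n + 1), Q (gs Q x j) (x n) * Q (gs Q x i) (gs Q x j) = 0 := by
    intro j hj
    have : j ≠ i := by have := Finset.mem_range.mp hj; omega
    rw [gs_orth' Q x hsymm hpos (Ne.symm this), mul_zero]
  rw [Finset.sum_congr rfl h1, Finset.sum_const_zero, zero_add]
  exact null_orth Q hsymm hpos hw _

end GS


lemma seminorm_sum_le (p : Seminorm ℝ Φ) (s : Finset ℕ) (f : ℕ → Φ) :
    p (∑ i ∈ s, f i) ≤ ∑ i ∈ s, p (f i) := by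
  classical
  induction s using Finset.induction with
  | empty => simp
  | @insert _ _ h ih =>
    rw [Finset.sum_insert h, Finset.sum_insert h]
    exact le_trans (map_add_le_add p _ _) (by linarith)

lemma seminorm_sum_smul_le (p : Seminorm ℝ Φ) (s : Finset ℕ) (a : ℕ → ℝ) (f : ℕ → Φ) :
    p (∑ i ∈ s, a i • f i) ≤ Real.sqrt (∑ i ∈ s, a i ^ 2) * Real.sqrt (∑ i ∈ s, (p (f i)) ^ 2) := by
  have h1 : p (∑ i ∈ s, a i • f i) ≤ ∑ i ∈ s, |a i| * p (f i) := by
    refine le_trans (seminorm_sum_le p s _) ?_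
    apply Finset.sum_le_sum
    intro i _
    rw [map_smul_eq_mul]
    simp
  have h2 : (∑ i ∈ s, |a i| * p (f i)) ^ 2 ≤
      (∑ i ∈ s, a i ^ 2) * (∑ i ∈ s, (p (f i)) ^ 2) := by
    have := Finset.sum_mul_sq_le_sq_mul_sq s (fun i => |a i|) (fun i => p (f i))
    simpa [sq_abs] using this
  have h3 : (0:ℝ) ≤ ∑ i ∈ s, |a i| * p (f i) :=
    Finset.sum_nonneg (fun i _ => mul_nonneg (abs_nonneg _) (apply_nonneg _ _))
  calc p (∑ i ∈ s, a i • f i) ≤ ∑ i ∈ s, |a i| * p (f i) := h1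
    _ = Real.sqrt ((∑ i ∈ s, |a i| * p (f i)) ^ 2) := (Real.sqrt_sq h3).symm
    _ ≤ Real.sqrt ((∑ i ∈ s, a i ^ 2) * (∑ i ∈ s, (p (f i)) ^ 2)) := Real.sqrt_le_sqrt h2
    _ = _ := Real.sqrt_mul (Finset.sum_nonneg (fun i _ => sq_nonneg _)) _


/-- In a non-totally-bounded situation we can pick a separated sequence. -/
lemma exists_separated_seq (p q : Seminorm ℝ Φ) (R ε : ℝ)
    (hcon : ∀ D : Finset Φ, ∃ z, q z ≤ R ∧ ∀ y ∈ D, ε ≤ p (z - y)) :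
    ∃ xs : ℕ → Φ, (∀ n, q (xs n) ≤ R) ∧ ∀ n m : ℕ, n < m → ε ≤ p (xs m - xs n) := by
  classical
  set pick : Finset Φ → Φ := fun D => (hcon D).choose with hpick
  have hpick1 : ∀ D, q (pick D) ≤ R := fun D => (hcon D).choose_spec.1
  have hpick2 : ∀ D, ∀ y ∈ D, ε ≤ p (pick D - y) := fun D => (hcon D).choose_spec.2
  set F : ℕ → Finset Φ := fun n => Nat.rec ∅ (fun _ Fn => insert (pick Fn) Fn) n with hF
  have hFsucc : ∀ n, F (n + 1) = insert (pick (F n)) (F n) := fun n => rfl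
  refine ⟨fun n => pick (F n), fun n => hpick1 _, ?_⟩
  have hFmono : ∀ {n m : ℕ}, n ≤ m → F n ⊆ F m := by
    intro n m hnm
    induction m with
    | zero => cases Nat.le_zero.mp hnm; exact subset_rfl
    | succ m ih =>
      by_cases h : n = m + 1
      · subst h; exact subset_rfl
      · have h2 : n ≤ m := by omega
        exact subset_trans (ih h2) (by rw [hFsucc]; exact Finset.subset_insert _ _)
  intro n m hnm
  apply hpick2 (F m) (pick (F n))
  have h1 : pick (F n) ∈ F (n + 1) := by rw [hFsucc]; exact Finset.mem_insert_self _ _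
  exact hFmono hnm h1

/-- Pigeonhole/compactness: a bounded sequence in `ℝ^N` has two coordinatewise-close terms. -/
lemma exists_close_pair {N : ℕ} (v : ℕ → Fin N → ℝ) (R : ℝ) (hR : 0 ≤ R)
    (hv : ∀ k i, |v k i| ≤ R) (δ : ℝ) (hδ : 0 < δ) :
    ∃ a b : ℕ, a < b ∧ ∀ i, |v a i - v b i| < δ := by
  have hvmem : ∀ k : ℕ, v k ∈ Metric.closedBall (0 : Fin N → ℝ) R := by
    intro k
    rw [mem_closedBall_zero_iff, pi_norm_le_iff_of_nonneg hR]
    intro i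
    rw [Real.norm_eq_abs]
    exact hv _ _
  obtain ⟨L, _, ψ, hψmono, hψconv⟩ :=
    (isCompact_closedBall (0 : Fin N → ℝ) R).tendsto_subseq hvmem
  obtain ⟨K₀, hK₀⟩ := (Metric.tendsto_atTop.mp hψconv) (δ / 2) (by linarith)
  refine ⟨ψ K₀, ψ (K₀ + 1), hψmono (by omega), ?_⟩
  have hdist : dist (v (ψ K₀)) (v (ψ (K₀ + 1))) < δ := by
    have h1 := hK₀ K₀ (le_refl _)
    have h2 := hK₀ (K₀ + 1) (Nat.le_succ _)
    calc dist (v (ψ K₀)) (v (ψ (K₀ + 1)))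
        ≤ dist ((v ∘ ψ) K₀) L + dist ((v ∘ ψ) (K₀ + 1)) L := dist_triangle_right _ _ _
      _ < δ / 2 + δ / 2 := add_lt_add h1 h2
      _ = δ := by ring
  intro i
  have := dist_le_pi_dist (v (ψ K₀)) (v (ψ (K₀ + 1))) i
  rw [Real.dist_eq] at this
  exact lt_of_le_of_lt this hdist


lemma est1 (p : Seminorm ℝ Φ) (E : ℕ → Φ) (N : ℕ) (d : ℕ → ℝ) (C δ' ε : ℝ)
    (hd : ∀ i, i < N → |d i| < δ') (hsum : ∑ i ∈ Finset.range N, (p (E i)) ^ 2 ≤ C)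
    (hδ'pos : 0 < δ') (hε : 0 < ε)
    (hδval : δ' = ε / (4 * (Real.sqrt C + 1) * (N + 1))) :
    p (∑ i ∈ Finset.range N, d i • E i) ≤ ε / 4 := by
  have hC0 : (0:ℝ) ≤ C :=
    le_trans (Finset.sum_nonneg (fun i _ => sq_nonneg _)) hsum
  refine le_trans (seminorm_sum_smul_le p _ _ _) ?_
  have h1 : ∑ i ∈ Finset.range N, d i ^ 2 ≤ N * δ' ^ 2 := by
    calc ∑ i ∈ Finset.range N, d i ^ 2 ≤ ∑ _i ∈ Finset.range N, δ' ^ 2 := by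
          apply Finset.sum_le_sum
          intro i hi
          have h := hd i (Finset.mem_range.mp hi)
          nlinarith [abs_nonneg (d i), le_abs_self (d i), neg_abs_le (d i)]
      _ = N * δ' ^ 2 := by rw [Finset.sum_const, Finset.card_range, nsmul_eq_mul]
  have h2 : Real.sqrt (∑ i ∈ Finset.range N, d i ^ 2) ≤ (N + 1) * δ' := by
    refine le_trans (Real.sqrt_le_sqrt h1) ?_
    have e1 : (N : ℝ) * δ' ^ 2 = (Real.sqrt N * δ') ^ 2 := by
      rw [mul_pow, Real.sq_sqrt (Nat.cast_nonneg N)]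
    rw [e1, Real.sqrt_sq (by positivity)]
    have e2 : Real.sqrt N ≤ N + 1 := by
      have e3 : ((N : ℝ) + 1) = Real.sqrt (((N:ℝ) + 1) ^ 2) := by
        rw [Real.sqrt_sq (by positivity)]
      rw [e3]
      apply Real.sqrt_le_sqrt
      nlinarith [Nat.cast_nonneg (α := ℝ) N]
    nlinarith
  have h3 : Real.sqrt (∑ i ∈ Finset.range N, (p (E i)) ^ 2) ≤ Real.sqrt C :=
    Real.sqrt_le_sqrt hsum
  have h4 : (0:ℝ) ≤ Real.sqrt (∑ i ∈ Finset.range N, d i ^ 2) := Real.sqrt_nonneg _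
  have h5 : (0:ℝ) ≤ Real.sqrt (∑ i ∈ Finset.range N, (p (E i)) ^ 2) := Real.sqrt_nonneg _
  have h6 : (0:ℝ) ≤ Real.sqrt C := Real.sqrt_nonneg _
  calc Real.sqrt (∑ i ∈ Finset.range N, d i ^ 2)
        * Real.sqrt (∑ i ∈ Finset.range N, (p (E i)) ^ 2)
      ≤ ((N + 1) * δ') * Real.sqrt C := mul_le_mul h2 h3 h5 (by positivity)
    _ ≤ ε / 4 := by
        have hkey : ((N:ℝ) + 1) * δ' * Real.sqrt C
            = ε * Real.sqrt C / (4 * (Real.sqrt C + 1)) := by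
          rw [hδval]
          field_simp
        rw [hkey, div_le_div_iff₀ (by positivity) (by norm_num)]
        nlinarith

lemma est2 (p : Seminorm ℝ Φ) (E : ℕ → Φ) (s : Finset ℕ) (d : ℕ → ℝ) (R η ε : ℝ)
    (hR : 0 ≤ R) (hε : 0 < ε)
    (hd : ∑ i ∈ s, d i ^ 2 ≤ R ^ 2) (hsum : ∑ i ∈ s, (p (E i)) ^ 2 < η)
    (hηval : η = (ε / (4 * (R + 1))) ^ 2) :
    p (∑ i ∈ s, d i • E i) < ε / 4 := by
  refine lt_of_le_of_lt (seminorm_sum_smul_le p _ _ _) ?_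
  have h2 : Real.sqrt (∑ i ∈ s, d i ^ 2) ≤ R := by
    refine le_trans (Real.sqrt_le_sqrt hd) ?_
    rw [Real.sqrt_sq hR]
  have h4 : Real.sqrt (∑ i ∈ s, (p (E i)) ^ 2) ≤ ε / (4 * (R + 1)) := by
    refine le_trans (Real.sqrt_le_sqrt (le_of_lt hsum)) ?_
    rw [hηval, Real.sqrt_sq (by positivity)]
  calc Real.sqrt (∑ i ∈ s, d i ^ 2) * Real.sqrt (∑ i ∈ s, (p (E i)) ^ 2)
      ≤ R * (ε / (4 * (R + 1))) := mul_le_mul h2 h4 (Real.sqrt_nonneg _) hR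
    _ < ε / 4 := by
        have h7 : (0:ℝ) < 4 * (R + 1) := by positivity
        have e1 : R * (ε / (4 * (R + 1))) = R * ε / (4 * (R + 1)) := by ring
        rw [e1, div_lt_div_iff₀ h7 (by norm_num : (0:ℝ) < 4)]
        nlinarith

/-- A finite ε-net for a q-ball, in the p-pseudometric. -/
lemma exists_finite_net (p q : Seminorm ℝ Φ) (hpq : p ≤ q) (hq : IsHilbertian q)
    (hHS : IsHilbertSchmidtPair p q) (R : ℝ) (hR : 0 ≤ R) (ε : ℝ) (hε : 0 < ε) :
    ∃ D : Finset Φ, ∀ z : Φ, q z ≤ R → ∃ y ∈ D, p (z - y) < ε := by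
  classical
  by_contra hcon
  push_neg at hcon
  obtain ⟨xs, hxsB, hsep⟩ := exists_separated_seq p q R ε hcon
  -- set up the Hilbertian structure
  obtain ⟨Q, hsymm, hpos, hval⟩ := hq
  have hpolar : ∀ a b, polarForm q a b = Q a b := by
    intro a b
    rw [polarForm, hval, hval, hval]
    simp only [map_add, LinearMap.add_apply]
    rw [hsymm b a]; ring
  obtain ⟨C, hC⟩ := hHS
  have hC0 : (0:ℝ) ≤ C := by
    have := hC 0 (fun i => i.elim0) (fun i _ => i.elim0)
    simpa using this
  set e : ℕ → Φ := gs Q xs with he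
  -- the sums of p(e i)^2 are bounded by C
  have hsum_bound : ∀ s : Finset ℕ, ∑ i ∈ s, (p (e i)) ^ 2 ≤ C := by
    intro s
    set s' : Finset ℕ := s.filter (fun i => Q (e i) (e i) = 1) with hs'
    have h1 : ∑ i ∈ s, (p (e i)) ^ 2 = ∑ i ∈ s', (p (e i)) ^ 2 := by
      symm
      apply Finset.sum_subset (Finset.filter_subset _ _)
      intro i hi hni
      have : e i = 0 := by
        rcases gs_norm Q xs hpos i with h | h
        · exact h
        · exact absurd (Finset.mem_filter.mpr ⟨hi, h⟩) hni
      rw [this, map_zero]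
      norm_num
    rw [h1]
    set m := s'.card with hm
    set emb := s'.orderIsoOfFin (rfl : s'.card = m) with hemb
    set φ : Fin m → Φ := fun k => e ((emb k : ℕ)) with hφ
    have hON : ∀ i j, polarForm q (φ i) (φ j) = if i = j then 1 else 0 := by
      intro i j
      rw [hpolar]
      by_cases hij : i = j
      · subst hij
        rw [if_pos rfl]
        have := (emb i).2
        exact (Finset.mem_filter.mp this).2
      · rw [if_neg hij]
        apply gs_orth' Q xs hsymm hpos
        intro hcontra
        apply hij
        have := emb.injective
        apply this
        exact Subtype.ext hcontra
    have hCs := hC m φ hON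
    have : ∑ k : Fin m, (p (φ k)) ^ 2 = ∑ i ∈ s', (p (e i)) ^ 2 := by
      rw [← Finset.sum_coe_sort s' (fun i => (p (e i)) ^ 2)]
      exact Fintype.sum_equiv emb.toEquiv _ _ (fun k => rfl)
    linarith
  -- summability and tail bound
  set g : ℕ → ℝ := fun i => (p (e i)) ^ 2 with hg
  have hgnn : ∀ i, 0 ≤ g i := fun i => sq_nonneg _
  have hgsum : Summable g := summable_of_sum_le hgnn hsum_bound
  set η : ℝ := (ε / (4 * (R + 1))) ^ 2 with hη
  have hηpos : 0 < η := by
    have hdpos : 0 < ε / (4 * (R + 1)) := by positivity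
    exact pow_pos hdpos 2
  obtain ⟨s₀, hs₀⟩ := summable_iff_vanishing.mp hgsum (Set.Ioo (-η) η)
    (Ioo_mem_nhds (by linarith) hηpos)
  set N : ℕ := s₀.sup id + 1 with hN
  have htail : ∀ t : Finset ℕ, (∀ i ∈ t, N ≤ i) → ∑ i ∈ t, g i < η := by
    intro t ht
    have hdisj : Disjoint t s₀ := by
      rw [Finset.disjoint_left]
      intro a ha has
      have h1 := ht a ha
      have h2 : a ≤ s₀.sup id := Finset.le_sup (f := id) has
      omega
    exact (hs₀ t hdisj).2
  clear_value N
  -- coefficients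
  set c : ℕ → ℕ → ℝ := fun n i => Q (e i) (xs n) with hc
  have hQbd : ∀ n, Q (xs n) (xs n) ≤ R ^ 2 := by
    intro n
    rw [← hval]
    have := hxsB n
    have h0 : 0 ≤ q (xs n) := apply_nonneg _ _
    nlinarith
  have hcbd : ∀ n i, |c n i| ≤ R := by
    intro n i
    have h1 := gs_coeff_bessel Q xs hsymm hpos {i} n
    rw [Finset.sum_singleton] at h1
    have h2 := hQbd n
    have : (c n i) ^ 2 ≤ R ^ 2 := le_trans h1 h2
    calc |c n i| = Real.sqrt ((c n i) ^ 2) := (Real.sqrt_sq_eq_abs _).symm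
      _ ≤ Real.sqrt (R ^ 2) := Real.sqrt_le_sqrt this
      _ = R := Real.sqrt_sq hR
  -- compactness in finite dimensions: find two close coefficient vectors
  set δ' : ℝ := ε / (4 * (Real.sqrt C + 1) * (N + 1)) with hδ'
  have hδ'pos : 0 < δ' := by
    have : 0 ≤ Real.sqrt C := Real.sqrt_nonneg _
    apply div_pos hε
    positivity
  obtain ⟨a, b, hab, hclose⟩ := exists_close_pair (fun k i => c (N + k) (i : ℕ)) R hR
    (fun k i => hcbd _ _) δ' hδ'pos
  set n := N + a with hn
  set m := N + b with hmm
  have hnm : n < m := by omega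
  have hNn : N ≤ n := by omega
  have hcoorddist : ∀ k : Fin N, |c n (k : ℕ) - c m (k : ℕ)| < δ' := fun k => hclose k
  clear_value n m
  -- decompose x_n and x_m
  obtain ⟨w₁, hw₁, hrep₁⟩ := gs_rep Q xs hsymm hpos n
  obtain ⟨w₂, hw₂, hrep₂⟩ := gs_rep Q xs hsymm hpos m
  have hqnull : ∀ w : Φ, Q w w = 0 → p w = 0 := by
    intro w hw
    have h1 : q w = 0 := by
      have h2 : q w ^ 2 = 0 := by rw [hval]; exact hw
      have h3 := apply_nonneg q w
      nlinarith
    have h2 := hpq w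
    have h3 := apply_nonneg p w
    linarith
  -- extend representation of x n to range (m+1)
  have hrep₁c : xs n = (∑ i ∈ Finset.range (n + 1), c n i • e i) + w₁ := hrep₁
  have hrep₁' : xs n = (∑ i ∈ Finset.range (m + 1), c n i • e i) + w₁ := by
    rw [hrep₁c]
    congr 1
    apply Finset.sum_subset
    · apply Finset.range_subset_range.mpr; omega
    · intro i hi hni
      have hlt : n < i := by
        simp only [Finset.mem_range] at hi hni
        omega
      have hz : c n i = 0 := gs_coeff_zero Q xs hsymm hpos hlt
      rw [hz, zero_smul]
  have hrep₂' : xs m = (∑ i ∈ Finset.range (m + 1), c m i • e i) + w₂ := hrep₂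
  -- split sums at N
  have hsplit : ∀ (a : ℕ → ℝ), ∑ i ∈ Finset.range (m + 1), a i • e i
      = (∑ i ∈ Finset.range N, a i • e i) + ∑ i ∈ Finset.Ico N (m + 1), a i • e i := by
    intro a
    rw [Finset.range_eq_Ico, Finset.range_eq_Ico]
    exact (Finset.sum_Ico_consecutive (fun i => a i • e i) (Nat.zero_le N) (show N ≤ m + 1 by omega)).symm
  -- the three estimates
  have hbound1 : p (∑ i ∈ Finset.range N, (c n i - c m i) • e i) ≤ ε / 4 := by
    apply est1 p e N (fun i => c n i - c m i) C δ' ε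
    · intro i hi
      exact hcoorddist ⟨i, hi⟩
    · exact hsum_bound _
    · exact hδ'pos
    · exact hε
    · exact hδ'
  have hbound2 : ∀ n' : ℕ, p (∑ i ∈ Finset.Ico N (m + 1), c n' i • e i) < ε / 4 := by
    intro n'
    apply est2 p e _ (c n') R η ε hR hε
    · exact le_trans (gs_coeff_bessel Q xs hsymm hpos _ _) (hQbd _)
    · apply htail
      intro i hi
      exact (Finset.mem_Ico.mp hi).1
    · exact hη
  -- assemble the contradiction
  set A := ∑ i ∈ Finset.range N, (c n i - c m i) • e i with hA
  set B₁ := ∑ i ∈ Finset.Ico N (m + 1), c n i • e i with hB₁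
  set B₂ := ∑ i ∈ Finset.Ico N (m + 1), c m i • e i with hB₂
  have hd : xs n - xs m = A + B₁ - B₂ + w₁ - w₂ := by
    rw [hrep₁', hrep₂', hsplit (c n), hsplit (c m), hA]
    rw [show ∑ i ∈ Finset.range N, (c n i - c m i) • e i
        = (∑ i ∈ Finset.range N, c n i • e i) - ∑ i ∈ Finset.range N, c m i • e i by
      rw [← Finset.sum_sub_distrib]
      apply Finset.sum_congr rfl
      intro i _
      rw [sub_smul]]
    abel
  have hptotal : p (xs n - xs m) ≤ p A + p B₁ + p B₂ + p w₁ + p w₂ := by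
    rw [hd]
    calc p (A + B₁ - B₂ + w₁ - w₂) ≤ p (A + B₁ - B₂ + w₁) + p w₂ := map_sub_le_add p _ _
      _ ≤ (p (A + B₁ - B₂) + p w₁) + p w₂ := by
          have := map_add_le_add p (A + B₁ - B₂) w₁
          linarith
      _ ≤ ((p (A + B₁) + p B₂) + p w₁) + p w₂ := by
          have := map_sub_le_add p (A + B₁) B₂
          linarith
      _ ≤ (((p A + p B₁) + p B₂) + p w₁) + p w₂ := by
          have := map_add_le_add p A B₁
          linarith
      _ = p A + p B₁ + p B₂ + p w₁ + p w₂ := by ring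
  have hsymmd : p (xs m - xs n) = p (xs n - xs m) := by
    rw [← map_neg_eq_map p, neg_sub]
  have hεle := hsep n m hnm
  rw [hsymmd] at hεle
  have hpw₁ : p w₁ = 0 := hqnull w₁ hw₁
  have hpw₂ : p w₂ = 0 := hqnull w₂ hw₂
  have hb1 := hbound1
  have hb2 := hbound2 n
  have hb3 := hbound2 m
  rw [← hB₁] at hb2
  rw [← hB₂] at hb3
  linarith


/-- The key separability lemma: a Hilbert–Schmidt pair yields a separable quotient. -/
lemma sep_of_HS (p q : Seminorm ℝ Φ) (hpq : p ≤ q) (hq : IsHilbertian q)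
    (hHS : IsHilbertSchmidtPair p q) : HasSeparableQuotient p := by
  classical
  have hnet : ∀ k m : ℕ, ∃ D : Finset Φ, ∀ z : Φ, q z ≤ (k : ℝ) →
      ∃ y ∈ D, p (z - y) < 1 / ((m : ℝ) + 1) :=
    fun k m => exists_finite_net p q hpq hq hHS k (Nat.cast_nonneg k) _ (by positivity)
  choose D hD using hnet
  refine ⟨⋃ k, ⋃ m, ((D k m : Finset Φ) : Set Φ),
    Set.countable_iUnion (fun k => Set.countable_iUnion (fun m => (D k m).countable_toSet)),
    fun x ε hε => ?_⟩
  obtain ⟨m, hm⟩ := exists_nat_one_div_lt hε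
  have hk : q x ≤ (⌈q x⌉₊ : ℝ) := Nat.le_ceil _
  obtain ⟨y, hy, hlt⟩ := hD ⌈q x⌉₊ m x hk
  exact ⟨y, Set.mem_iUnion.mpr ⟨⌈q x⌉₊, Set.mem_iUnion.mpr ⟨m, hy⟩⟩, lt_trans hlt hm⟩

/-- `sqSum` is Hilbertian when every member of the family is. -/
lemma sqSum_hilbertian (fam : ι → Seminorm ℝ Φ) (s : Finset ι)
    (h : ∀ i, IsHilbertian (fam i)) : IsHilbertian (sqSum fam s) := by
  classical
  choose Qf hsy hp hv using h
  refine ⟨∑ i ∈ s, Qf i, ?_, ?_, ?_⟩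
  · intro x y
    simp only [LinearMap.coe_sum, Finset.sum_apply, LinearMap.sum_apply]
    exact Finset.sum_congr rfl (fun i _ => hsy i x y)
  · intro x
    simp only [LinearMap.coe_sum, Finset.sum_apply, LinearMap.sum_apply]
    exact Finset.sum_nonneg (fun i _ => hp i x)
  · intro x
    simp only [LinearMap.coe_sum, Finset.sum_apply, LinearMap.sum_apply]
    rw [sqSum_apply, Real.sq_sqrt (Finset.sum_nonneg (fun i _ => sq_nonneg _))]
    exact Finset.sum_congr rfl (fun i _ => hv i x)

/-- `sqSum` has a separable quotient when every member of the family does. -/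
lemma sqSum_sep (fam : ι → Seminorm ℝ Φ) (s : Finset ι)
    (h : ∀ i ∈ s, HasSeparableQuotient (fam i)) : HasSeparableQuotient (sqSum fam s) := by
  classical
  induction s using Finset.induction with
  | empty =>
    refine ⟨{0}, Set.countable_singleton _, fun x ε hε => ⟨0, rfl, ?_⟩⟩
    rw [sqSum_apply]
    simpa using hε
  | @insert a s ha ih =>
    refine sep_add (h a (Finset.mem_insert_self a s))
      (ih (fun i hi => h i (Finset.mem_insert_of_mem hi))) ?_
    intro x
    rw [sqSum_apply, sqSum_apply, Finset.sum_insert ha]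
    have h1 : (0:ℝ) ≤ fam a x := apply_nonneg _ _
    have h2 : (0:ℝ) ≤ ∑ i ∈ s, (fam i x) ^ 2 :=
      Finset.sum_nonneg (fun i _ => sq_nonneg _)
    have h3 : (fam a x) ^ 2 + ∑ i ∈ s, (fam i x) ^ 2
        ≤ (fam a x + Real.sqrt (∑ i ∈ s, (fam i x) ^ 2)) ^ 2 := by
      have h4 : (0:ℝ) ≤ Real.sqrt (∑ i ∈ s, (fam i x) ^ 2) := Real.sqrt_nonneg _
      have h5 : (Real.sqrt (∑ i ∈ s, (fam i x) ^ 2)) ^ 2 = ∑ i ∈ s, (fam i x) ^ 2 :=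
        Real.sq_sqrt h2
      nlinarith
    refine le_trans (Real.sqrt_le_sqrt h3) ?_
    rw [Real.sqrt_sq (by positivity)]

/-- `sqSum` is continuous when every member of the family is. -/
lemma sqSum_cont [TopologicalSpace Φ] (fam : ι → Seminorm ℝ Φ) (s : Finset ι)
    (h : ∀ i, Continuous ⇑(fam i)) : Continuous ⇑(sqSum fam s) := by
  have : (⇑(sqSum fam s)) = fun x => Real.sqrt (∑ i ∈ s, (fam i x) ^ 2) := rfl
  rw [this]
  exact Real.continuous_sqrt.comp (continuous_finset_sum s (fun i _ => ((h i).pow 2)))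

end AuxSep

/-- Let `Φ` be nuclear, `T > 0`, `X` a cylindrical process on `[0,T]`
whose family `{X_t : t ∈ [0,T]}` is equicontinuous into `L⁰(Ω,F,P)`, and let `X̂(φ)` be a
continuous version of `X(φ)` for each `φ`. Then there exists a weaker countably
Hilbertian topology `θ` on `Φ` such that the family `{X̂_t : t ∈ [0,T]}` is
`θ`-equicontinuous. -/
theorem exists_wcht_equicontinuous_version
    {Φ : Type*} [AddCommGroup Φ] [Module ℝ Φ] [TopologicalSpace Φ]
    [IsTopologicalAddGroup Φ] [ContinuousSMul ℝ Φ]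
    {Ω : Type*} [MeasurableSpace Ω] (P : Measure Ω) [IsProbabilityMeasure P] [P.IsComplete]
    (hΦ : IsNuclearSpace Φ) (T : ℝ) (hT : 0 < T)
    (X Xh : ℝ → Φ → Ω → ℝ)
    (hcyl : IsCylindricalProcess P X (Set.Icc 0 T))
    (hequi : EquicontinuousInProb P X (Set.Icc 0 T))
    (hXhmeas : ∀ t ∈ Set.Icc (0 : ℝ) T, ∀ φ : Φ, Measurable (Xh t φ))
    (hXhpaths : ∀ φ : Φ, ∀ᵐ ω ∂P, ContinuousOn (fun t => Xh t φ ω) (Set.Icc 0 T))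
    (hver : ∀ φ : Φ, ∀ t ∈ Set.Icc (0 : ℝ) T, ∀ᵐ ω ∂P, Xh t φ ω = X t φ ω) :
    ∃ θ : WCHT Φ, ∀ ε : ℝ, 0 < ε → ∃ (n : ℕ) (δ : ℝ), 0 < δ ∧
      ∀ t ∈ Set.Icc (0 : ℝ) T, ∀ φ : Φ, θ.p n φ < δ →
        P {ω | ε ≤ |Xh t φ ω|} < ENNReal.ofReal ε := by
  classical
  obtain ⟨ι, hι, fam, hwith, hhilb, hnuc⟩ := hΦ
  haveI := hι
  have hsepi : ∀ i, HasSeparableQuotient (fam i) := by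
    intro i
    obtain ⟨j, hle, hHS⟩ := hnuc i
    exact sep_of_HS (fam i) (fam j) hle (hhilb j) hHS
  have hconti : ∀ i, Continuous ⇑(fam i) := fun i => hwith.continuous_seminorm i
  have hkey : ∀ k : ℕ, ∃ (s : Finset ι) (r : ℝ), 0 < r ∧
      ∀ t ∈ Set.Icc (0:ℝ) T, ∀ φ : Φ, (∀ i ∈ s, fam i φ < r) →
        P {ω | 1 / ((k:ℝ) + 1) ≤ |X t φ ω|} < ENNReal.ofReal (1 / ((k:ℝ) + 1)) := by
    intro k
    have hpos : (0:ℝ) < 1 / ((k:ℝ) + 1) := by positivity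
    obtain ⟨U, hU, hUp⟩ := hequi _ hpos
    obtain ⟨V, hV, hVU⟩ := (hwith.hasBasis.mem_iff.mp hU)
    obtain ⟨s, r, hr, hVeq⟩ := (SeminormFamily.basisSets_iff fam).mp hV
    refine ⟨s, r, hr, ?_⟩
    intro t ht φ hφ
    apply hUp t ht φ
    apply hVU
    have : φ ∈ (s.sup fam).ball 0 r := by
      rw [Seminorm.mem_ball_zero]
      exact Seminorm.finset_sup_apply_lt hr hφ
    rw [hVeq]
    exact this
  choose sfn rfn hrpos hbound using hkey
  set tset : ℕ → Finset ι := fun n => (Finset.range (n + 1)).biUnion sfn with htset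
  have htmono : ∀ {n m : ℕ}, n ≤ m → tset n ⊆ tset m := by
    intro n m hnm
    apply Finset.biUnion_subset_biUnion_of_subset_left
    intro i hi
    simp only [Finset.mem_range] at *
    omega
  refine ⟨⟨fun n => sqSum fam (tset n), ?_, ?_, ?_, ?_⟩, ?_⟩
  · intro n m hnm
    exact sqSum_mono fam (htmono hnm)
  · intro n; exact sqSum_hilbertian fam _ hhilb
  · intro n; exact sqSum_sep fam _ (fun i _ => hsepi i)
  · intro n; exact sqSum_cont fam _ hconti
  · intro ε hε
    obtain ⟨k, hk⟩ := exists_nat_one_div_lt hε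
    refine ⟨k, rfn k, hrpos k, ?_⟩
    intro t ht φ hφ
    have hfam : ∀ i ∈ sfn k, fam i φ < rfn k := by
      intro i hi
      have h1 : i ∈ tset k := Finset.mem_biUnion.mpr ⟨k, Finset.self_mem_range_succ k, hi⟩
      exact lt_of_le_of_lt (le_sqSum fam h1 φ) hφ
    have hX := hbound k t ht φ hfam
    have hae := hver φ t ht
    have hsub : {ω | ε ≤ |Xh t φ ω|} ≤ᵐ[P] {ω | 1 / ((k:ℝ) + 1) ≤ |X t φ ω|} := by
      filter_upwards [hae] with ω hω
      intro hmem
      show (1 : ℝ) / ((k:ℝ) + 1) ≤ |X t φ ω|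
      have hmem' : ε ≤ |Xh t φ ω| := hmem
      rw [← hω]
      linarith
    calc P {ω | ε ≤ |Xh t φ ω|}
        ≤ P {ω | 1 / ((k:ℝ) + 1) ≤ |X t φ ω|} := measure_mono_ae hsub
      _ < ENNReal.ofReal (1 / ((k:ℝ) + 1)) := hX
      _ ≤ ENNReal.ofReal ε := ENNReal.ofReal_le_ofReal hk.le


end Paper
end
end

section
/- Let Φ be a nuclear space, T > 0, D a countable dense subset of [0,T], and let X̂ be a linear map from Φ into the continuous real-valued processes on [0,T] that is continuous as a map from Φ into C_T(ℝ). Then for every ε > 0 there exists a continuous Hilbertian semi-norm p on Φ such that E( sup_{t∈D} |1 − e^{i X̂_t(φ)}| ) ≤ ε + 2 p(φ)² for all φ ∈ Φ. -/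
open MeasureTheory Topology Filter Set
open scoped ENNReal NNReal

noncomputable section

namespace Paper

universe u

variable {Φ : Type*} [AddCommGroup Φ] [Module ℝ Φ]

section Aux

lemma aux_two_sub_cos (x : ℝ) : 2 - 2 * Real.cos x ≤ x ^ 2 := by
  have h1 := Real.cos_sq (x / 2)
  have h2 := Real.sin_sq_add_cos_sq (x / 2)
  have h3 := Real.sin_sq_le_sq (x := x / 2)
  have h4 : 2 * (x / 2) = x := by ring
  rw [h4] at h1
  nlinarith

lemma aux_abs_one_sub_exp_le (x : ℝ) :
    ‖1 - Complex.exp (x * Complex.I)‖ ≤ |x| := by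
  have hsq : ‖1 - Complex.exp (x * Complex.I)‖ ^ 2 = 2 - 2 * Real.cos x := by
    rw [Complex.sq_norm, Complex.normSq_apply]
    simp [Complex.exp_ofReal_mul_I_re, Complex.exp_ofReal_mul_I_im]
    nlinarith [Real.sin_sq_add_cos_sq x]
  refine le_of_pow_le_pow_left₀ two_ne_zero (abs_nonneg x) ?_
  rw [hsq, sq_abs]
  exact aux_two_sub_cos x

lemma aux_abs_one_sub_exp_le_two (x : ℝ) :
    ‖1 - Complex.exp (x * Complex.I)‖ ≤ 2 := by
  calc ‖1 - Complex.exp (x * Complex.I)‖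
      ≤ ‖(1 : ℂ)‖ + ‖Complex.exp (x * Complex.I)‖ :=
        by simpa using norm_sub_le (1 : ℂ) (Complex.exp (x * Complex.I))
    _ = 2 := by rw [Complex.norm_exp_ofReal_mul_I]; norm_num

variable {Φ' : Type*} [AddCommGroup Φ'] [Module ℝ Φ']

lemma aux_cs (Q : Φ' →ₗ[ℝ] Φ' →ₗ[ℝ] ℝ) (hs : ∀ x y, Q x y = Q y x)
    (hp : ∀ x, 0 ≤ Q x x) (x y : Φ') :
    Q x y ≤ Real.sqrt (Q x x) * Real.sqrt (Q y y) := by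
  have key : ∀ t : ℝ, 0 ≤ Q y y * (t * t) + (2 * Q x y) * t + Q x x := by
    intro t
    have h := hp (x + t • y)
    simp only [map_add, LinearMap.map_smul, LinearMap.add_apply, LinearMap.smul_apply,
      smul_eq_mul] at h
    have hyx : Q y x = Q x y := hs y x
    rw [hyx] at h; linarith
  have hd := discrim_le_zero key
  rw [discrim] at hd
  have h1 : Q x y ^ 2 ≤ Q x x * Q y y := by nlinarith
  calc Q x y ≤ |Q x y| := le_abs_self _
    _ = Real.sqrt (Q x y ^ 2) := (Real.sqrt_sq_eq_abs _).symm
    _ ≤ Real.sqrt (Q x x * Q y y) := Real.sqrt_le_sqrt h1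
    _ = Real.sqrt (Q x x) * Real.sqrt (Q y y) := Real.sqrt_mul (hp x) _

/-- The seminorm associated to a symmetric positive semidefinite bilinear form. -/
noncomputable def seminormOfBilin (Q : Φ' →ₗ[ℝ] Φ' →ₗ[ℝ] ℝ) (hs : ∀ x y, Q x y = Q y x)
    (hp : ∀ x, 0 ≤ Q x x) : Seminorm ℝ Φ' :=
  Seminorm.of (fun x => Real.sqrt (Q x x))
    (fun x y => by
      have hxy := aux_cs Q hs hp x y
      have hQ : Q (x + y) (x + y) = Q x x + 2 * Q x y + Q y y := by
        simp only [map_add, LinearMap.add_apply]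
        rw [hs y x]; ring
      have hle : Q (x + y) (x + y) ≤ (Real.sqrt (Q x x) + Real.sqrt (Q y y)) ^ 2 := by
        have hx2 : Real.sqrt (Q x x) ^ 2 = Q x x := Real.sq_sqrt (hp x)
        have hy2 : Real.sqrt (Q y y) ^ 2 = Q y y := Real.sq_sqrt (hp y)
        nlinarith
      calc Real.sqrt (Q (x + y) (x + y))
          ≤ Real.sqrt ((Real.sqrt (Q x x) + Real.sqrt (Q y y)) ^ 2) := Real.sqrt_le_sqrt hle
        _ = Real.sqrt (Q x x) + Real.sqrt (Q y y) := by
            rw [Real.sqrt_sq (by positivity)])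
    (fun a x => by
      simp only [LinearMap.map_smul, LinearMap.smul_apply, smul_eq_mul, Real.norm_eq_abs]
      rw [show a * (a * Q x x) = a ^ 2 * Q x x by ring, Real.sqrt_mul (sq_nonneg a),
        Real.sqrt_sq_eq_abs])

@[simp] lemma seminormOfBilin_apply (Q : Φ' →ₗ[ℝ] Φ' →ₗ[ℝ] ℝ) (hs) (hp) (x : Φ') :
    seminormOfBilin Q hs hp x = Real.sqrt (Q x x) := rfl

end Aux

set_option maxHeartbeats 1000000

/-- Let `Φ` be nuclear, `T > 0`, `D ⊆ [0,T]` countable dense, and `X̂`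
a linear map from `Φ` into the continuous real processes on `[0,T]` which is continuous
into `C_T(ℝ)`. Then for every `ε > 0` there is a continuous Hilbertian seminorm `p` on
`Φ` with `E(sup_{t∈D} |1 - e^{i X̂_t(φ)}|) ≤ ε + 2 p(φ)²` for all `φ ∈ Φ`. -/

theorem characteristic_function_bound
    {Φ : Type*} [AddCommGroup Φ] [Module ℝ Φ] [TopologicalSpace Φ]
    [IsTopologicalAddGroup Φ] [ContinuousSMul ℝ Φ]
    {Ω : Type*} [MeasurableSpace Ω] (P : Measure Ω) [IsProbabilityMeasure P] [P.IsComplete]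
    (hΦ : IsNuclearSpace Φ) (T : ℝ) (hT : 0 < T)
    (D : Set ℝ) (hDcount : D.Countable) (hDsub : D ⊆ Set.Icc 0 T)
    (hDdense : Set.Icc (0 : ℝ) T ⊆ closure D)
    (Xh : ℝ → Φ → Ω → ℝ)
    (hXhmeas : ∀ t ∈ Set.Icc (0 : ℝ) T, ∀ φ : Φ, Measurable (Xh t φ))
    (hXhlin : ∀ t ∈ Set.Icc (0 : ℝ) T, ∀ (a b : ℝ) (φ ψ : Φ), ∀ᵐ ω ∂P,
      Xh t (a • φ + b • ψ) ω = a * Xh t φ ω + b * Xh t ψ ω)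
    (hXhpaths : ∀ φ : Φ, ∀ᵐ ω ∂P, ContinuousOn (fun t => Xh t φ ω) (Set.Icc 0 T))
    (hXhcont : ∀ φ₀ : Φ, ∀ ε : ℝ, 0 < ε → ∃ U ∈ 𝓝 φ₀, ∀ φ ∈ U,
      P {ω | ∃ t ∈ Set.Icc (0 : ℝ) T, ε ≤ |Xh t φ ω - Xh t φ₀ ω|} < ENNReal.ofReal ε)
    (ε : ℝ) (hε : 0 < ε) :
    ∃ p : Seminorm ℝ Φ, IsHilbertian p ∧ Continuous ⇑p ∧
      ∀ φ : Φ,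
        (∫ ω, (⨆ t ∈ D, ‖1 - Complex.exp ((Xh t φ ω : ℂ) * Complex.I)‖) ∂P)
          ≤ ε + 2 * (p φ) ^ 2 := by
  classical
  obtain ⟨ι, hι, fam, hwith, hhilb, -⟩ := hΦ
  choose Qf hQfsymm hQfpos hQfeq using hhilb
  set ε' : ℝ := ε / 3 with hε'def
  have hε' : 0 < ε' := by positivity
  clear_value ε'
  obtain ⟨U, hU, hUprop⟩ := hXhcont 0 ε' hε'
  obtain ⟨V, hVbasis, hVU⟩ := hwith.hasBasis.mem_iff.mp hU
  obtain ⟨I, r, hr, rfl⟩ := (SeminormFamily.basisSets_iff fam).mp hVbasis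
  set c : ℝ := r⁻¹ * r⁻¹ with hcdef
  have hc : 0 ≤ c := by positivity
  set Q : Φ →ₗ[ℝ] Φ →ₗ[ℝ] ℝ := c • (∑ i ∈ I, Qf i) with hQdef
  have hQapp : ∀ x y : Φ, Q x y = c * ∑ i ∈ I, Qf i x y := by
    intro x y
    simp [hQdef, LinearMap.smul_apply, LinearMap.sum_apply, smul_eq_mul]
  have hQs : ∀ x y : Φ, Q x y = Q y x := by
    intro x y
    rw [hQapp, hQapp]
    congr 1
    exact Finset.sum_congr rfl fun i _ => hQfsymm i x y
  have hQxx : ∀ x : Φ, Q x x = c * ∑ i ∈ I, (fam i x) ^ 2 := by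
    intro x
    rw [hQapp]
    congr 1
    exact Finset.sum_congr rfl fun i _ => (hQfeq i x).symm
  have hQp : ∀ x : Φ, 0 ≤ Q x x := by
    intro x
    rw [hQxx]
    exact mul_nonneg hc (Finset.sum_nonneg fun i _ => sq_nonneg _)
  set p : Seminorm ℝ Φ := seminormOfBilin Q hQs hQp with hpdef
  have hpsq : ∀ x : Φ, (p x) ^ 2 = Q x x := fun x => Real.sq_sqrt (hQp x)
  clear_value c Q
  have hpcont : Continuous ⇑p := by
    have h1 : Continuous fun x : Φ => Real.sqrt (c * ∑ i ∈ I, (fam i x) ^ 2) :=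
      Real.continuous_sqrt.comp (continuous_const.mul
        (continuous_finset_sum _ fun i _ => (hwith.continuous_seminorm i).pow 2))
    have h2 : ⇑p = fun x : Φ => Real.sqrt (c * ∑ i ∈ I, (fam i x) ^ 2) := by
      funext x
      rw [hpdef, seminormOfBilin_apply, hQxx]
    rw [h2]; exact h1
  clear_value p
  refine ⟨p, ⟨Q, hQs, hQp, hpsq⟩, hpcont, fun φ => ?_⟩
  -- the bad event
  set A : Set Ω := ⋃ t ∈ D, {ω | ε' ≤ |Xh t φ ω|} with hAdef
  have hAmeas : MeasurableSet A :=
    MeasurableSet.biUnion hDcount fun t ht =>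
      measurableSet_le measurable_const (hXhmeas t (hDsub ht) φ).abs
  set g : Ω → ℝ := fun ω =>
    ⨆ t ∈ D, ‖1 - Complex.exp ((Xh t φ ω : ℂ) * Complex.I)‖ with hgdef
  set h : Ω → ℝ := fun ω => ε' + A.indicator (fun _ => (2 : ℝ)) ω with hhdef
  have hIntInd : Integrable (A.indicator fun _ => (2 : ℝ)) P :=
    (integrable_const _).indicator hAmeas
  have hInth : Integrable h P := (integrable_const _).add hIntInd
  have hg_nonneg : ∀ ω, 0 ≤ g ω := fun ω =>
    Real.iSup_nonneg fun t => Real.iSup_nonneg fun _ => norm_nonneg _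
  have hgh : ∀ ω, g ω ≤ h ω := by
    intro ω
    by_cases hω : ω ∈ A
    · rw [hhdef]
      simp only [Set.indicator_of_mem hω]
      refine Real.iSup_le (fun t => Real.iSup_le (fun ht => ?_) (by positivity))
        (by positivity)
      exact (aux_abs_one_sub_exp_le_two _).trans (by linarith)
    · rw [hhdef]
      simp only [Set.indicator_of_notMem hω, add_zero]
      refine Real.iSup_le (fun t => Real.iSup_le (fun ht => ?_) hε'.le) hε'.le
      have hlt : ¬ (ε' ≤ |Xh t φ ω|) := fun hcon => hω (Set.mem_biUnion ht hcon)
      exact (aux_abs_one_sub_exp_le _).trans (not_le.mp hlt).le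
  have hint_le : (∫ ω, g ω ∂P) ≤ ∫ ω, h ω ∂P :=
    integral_mono_of_nonneg (ae_of_all _ hg_nonneg) hInth (ae_of_all _ hgh)
  have hinth_eq : (∫ ω, h ω ∂P) = ε' + (P A).toReal * 2 := by
    rw [hhdef]
    rw [integral_add (integrable_const _) hIntInd, integral_const,
      integral_indicator_const _ hAmeas]
    simp [measure_univ, smul_eq_mul, measureReal_def]
  have hfinal : ε' + (P A).toReal * 2 ≤ ε + 2 * (p φ) ^ 2 := by
    by_cases hcase : 1 ≤ p φ
    · have hPA1 : (P A).toReal ≤ 1 := by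
        have := prob_le_one (μ := P) (s := A)
        simpa using ENNReal.toReal_mono ENNReal.one_ne_top this
      have h1 : 1 ≤ (p φ) ^ 2 := by nlinarith [hcase]
      have hεε : ε' ≤ ε := by rw [hε'def]; linarith
      nlinarith
    · push_neg at hcase
      have hQlt : Q φ φ < 1 := by
        rw [← hpsq]
        exact pow_lt_one₀ (apply_nonneg p φ) hcase two_ne_zero
      have hsum_eq : ∑ i ∈ I, (fam i φ) ^ 2 = r ^ 2 * Q φ φ := by
        rw [hQxx, hcdef]
        field_simp
      have hfam : ∀ i ∈ I, fam i φ < r := by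
        intro i hi
        have h1 : (fam i φ) ^ 2 ≤ ∑ j ∈ I, (fam j φ) ^ 2 :=
          Finset.single_le_sum (f := fun j => (fam j φ) ^ 2) (fun j _ => sq_nonneg _) hi
        have h2 : (fam i φ) ^ 2 < r ^ 2 := by
          rw [hsum_eq] at h1
          nlinarith [hQlt, pow_pos hr 2]
        exact lt_of_pow_lt_pow_left₀ 2 hr.le h2
      have hφU : φ ∈ U := by
        apply hVU
        show φ ∈ (I.sup fam).ball 0 r
        rw [Seminorm.mem_ball_zero]
        exact Seminorm.finset_sup_apply_lt hr hfam
      have hP' := hUprop φ hφU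
      have hzero : ∀ᵐ ω ∂P, ∀ t ∈ D, Xh t 0 ω = 0 := by
        rw [ae_ball_iff hDcount]
        intro t ht
        filter_upwards [hXhlin t (hDsub ht) 0 0 0 0] with ω hω
        simpa using hω
      have hPA : P A ≤ P {ω | ∃ t ∈ Set.Icc (0 : ℝ) T, ε' ≤ |Xh t φ ω - Xh t 0 ω|} := by
        refine measure_mono_ae ?_
        filter_upwards [hzero] with ω hω hmem
        obtain ⟨t, ht, hle⟩ := Set.mem_iUnion₂.mp hmem
        exact ⟨t, hDsub ht, by rwa [hω t ht, sub_zero]⟩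
      have hPAle : (P A).toReal ≤ ε' :=
        ENNReal.toReal_le_of_le_ofReal hε'.le (hPA.trans hP'.le)
      have hε3 : ε' + ε' * 2 = ε := by rw [hε'def]; ring
      nlinarith [sq_nonneg (p φ)]
  calc (∫ ω, g ω ∂P) ≤ ∫ ω, h ω ∂P := hint_le
    _ = ε' + (P A).toReal * 2 := hinth_eq
    _ ≤ ε + 2 * (p φ) ^ 2 := hfinal

end Paper
end
end
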